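/- arXiv:2007.15977 — 4 statements merged into one kernel-verified Lean document; each statement's English description precedes it below -/
import Mathlib

section
/- For t ≥ 1, one has 2π Σ_{k∈ℤ} (-1)^k (k + 1/2) e^{-π t (k+1/2)²} ≥ 2π (1 - 1/175) e^{-π t/4}. -/
open Real

lemma exp_two_pi_ge : (526 : ℝ) ≤ Real.exp (2 * π) := by
  have h1 : (2.7182818283 : ℝ) < Real.exp 1 := Real.exp_one_gt_d9
  have hpi : (3.141592 : ℝ) < π := Real.pi_gt_d6
  have h2 : Real.exp (6.283184 : ℝ) ≤ Real.exp (2 * π) :=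
    Real.exp_le_exp.mpr (by linarith)
  have h3 : Real.exp (6.283184 : ℝ) = (Real.exp 1) ^ 6 * (Real.exp 0.070796) ^ 4 := by
    rw [← Real.exp_nat_mul, ← Real.exp_nat_mul, ← Real.exp_add]
    norm_num
  have h4 : (1.070796 : ℝ) ≤ Real.exp 0.070796 := by
    have := Real.add_one_le_exp (0.070796 : ℝ); linarith
  calc (526 : ℝ) ≤ (2.7182818283 : ℝ) ^ 6 * (1.070796 : ℝ) ^ 4 := by norm_num
    _ ≤ (Real.exp 1) ^ 6 * (Real.exp 0.070796) ^ 4 := by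
        apply mul_le_mul (pow_le_pow_left₀ (by norm_num) h1.le 6)
          (pow_le_pow_left₀ (by norm_num) h4 4) (by positivity) (by positivity)
    _ = Real.exp (6.283184 : ℝ) := h3.symm
    _ ≤ Real.exp (2 * π) := h2

lemma thousand_le_exp_seven : (1000 : ℝ) ≤ Real.exp 7 := by
  have h1 : (2.7182818283 : ℝ) < Real.exp 1 := Real.exp_one_gt_d9
  have h3 : Real.exp (7 : ℝ) = (Real.exp 1) ^ 7 := by
    rw [← Real.exp_nat_mul]; norm_num
  rw [h3]
  calc (1000 : ℝ) ≤ (2.71828 : ℝ) ^ 7 := by norm_num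
    _ ≤ (Real.exp 1) ^ 7 := pow_le_pow_left₀ (by norm_num) (by linarith) 7

set_option maxHeartbeats 1000000 in
theorem theta2_derivative_lower_bound (t : ℝ) (ht : 1 ≤ t) :
    2 * π * (1 - 1 / 175) * Real.exp (-π * t / 4) ≤
      2 * π * ∑' k : ℤ, (-1 : ℝ) ^ k * ((k : ℝ) + 1 / 2) * Real.exp (-π * t * ((k : ℝ) + 1 / 2) ^ 2) := by
  have hπ := Real.pi_gt_three
  set f : ℤ → ℝ := fun k => (-1 : ℝ) ^ k * ((k : ℝ) + 1 / 2) * Real.exp (-π * t * ((k : ℝ) + 1 / 2) ^ 2) with hf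
  have hsym : ∀ n : ℕ, f (-(n + 1)) = f n := by
    intro n
    simp only [hf]
    push_cast
    rw [zpow_neg, zpow_add_one₀ (by norm_num : (-1:ℝ) ≠ 0), zpow_natCast]
    rw [show (-((n:ℝ)+1) + 1/2) = -((n:ℝ) + 1/2) by ring, neg_sq]
    have h : ((-1:ℝ) ^ n * -1)⁻¹ = (-1:ℝ)^n * -1 := by
      rcases Nat.even_or_odd n with h | h
      · rw [h.neg_one_pow]; norm_num
      · rw [h.neg_one_pow]; norm_num
    rw [h]; ring
  have hbound : ∀ n : ℕ, |f n| ≤ Real.exp (-2 * n) := by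
    intro n
    have h1 : |f n| = ((n : ℝ) + 1 / 2) * Real.exp (-π * t * ((n : ℝ) + 1 / 2) ^ 2) := by
      simp only [hf, zpow_natCast]
      push_cast
      rw [abs_mul, abs_mul, abs_pow, abs_neg, abs_one, one_pow, one_mul,
        abs_of_nonneg (by positivity), abs_of_nonneg (Real.exp_pos _).le]
    rw [h1]
    have hn1 : ((n : ℝ) + 1 / 2) ≤ Real.exp n := by
      have := Real.add_one_le_exp (n : ℝ); linarith
    have hexp : Real.exp (-π * t * ((n : ℝ) + 1 / 2) ^ 2) ≤ Real.exp (-3 * n) := by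
      apply Real.exp_le_exp.mpr
      have hn0 : (0:ℝ) ≤ n := Nat.cast_nonneg n
      nlinarith [mul_le_mul_of_nonneg_right ht (by positivity : (0:ℝ) ≤ ((n:ℝ)+1/2)^2),
        sq_nonneg ((n:ℝ))]
    calc ((n : ℝ) + 1 / 2) * Real.exp (-π * t * ((n : ℝ) + 1 / 2) ^ 2)
        ≤ Real.exp n * Real.exp (-3 * n) :=
          mul_le_mul hn1 hexp (Real.exp_pos _).le (Real.exp_pos _).le
      _ = Real.exp (-2 * n) := by rw [← Real.exp_add]; ring_nf
  have hsumnat : Summable fun n : ℕ => f n := by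
    apply Summable.of_norm
    apply Summable.of_nonneg_of_le (fun n => norm_nonneg _) (fun n => hbound n)
    have h := Real.summable_exp_nat_mul_iff.mpr (by norm_num : (-2:ℝ) < 0)
    convert h using 2 with n
    ring
  have hsumneg : Summable fun n : ℕ => f (-(n + 1)) := by
    simpa only [hsym] using hsumnat
  have htsum : ∑' k : ℤ, f k = 2 * ∑' n : ℕ, f n := by
    rw [tsum_of_nat_of_neg_add_one hsumnat hsumneg]
    simp only [hsym]; ring
  have hsplit : ∑' n : ℕ, f n = f 0 + ∑' n : ℕ, f ((n : ℕ) + 1) := by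
    have := Summable.tsum_eq_zero_add hsumnat
    push_cast at this ⊢
    exact this
  have hf0 : f (0 : ℤ) = (1 / 2) * Real.exp (-π * t / 4) := by
    simp only [hf]
    norm_num
    ring_nf
  set E := Real.exp (-π * t / 4) with hE
  have hEpos : 0 < E := Real.exp_pos _
  set C : ℝ := (3/2) * Real.exp (-(2*π)) with hC
  have hCpos : 0 < C := by positivity
  have htail : ∀ n : ℕ, |f ((n : ℕ) + 1)| ≤ E * C * (1/1000 : ℝ) ^ n := by
    intro n
    have hn0 : (0:ℝ) ≤ n := Nat.cast_nonneg n
    have h1 : |f ((n : ℕ) + 1)| = ((n : ℝ) + 3/2) * Real.exp (-π * t * ((n : ℝ) + 3/2) ^ 2) := by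
      simp only [hf]
      rw [show ((n:ℤ) + 1) = ((n+1 : ℕ) : ℤ) by push_cast; ring, zpow_natCast]
      push_cast
      rw [show ((n:ℝ) + 1 + 1/2) = ((n:ℝ) + 3/2) by ring]
      rw [abs_mul, abs_mul, abs_pow, abs_neg, abs_one, one_pow, one_mul,
        abs_of_nonneg (by positivity), abs_of_nonneg (Real.exp_pos _).le]
    rw [h1]
    have hsplit2 : Real.exp (-π * t * ((n : ℝ) + 3/2) ^ 2)
        = E * Real.exp (-π * t * ((n:ℝ)^2 + 3*n + 2)) := by
      rw [hE, ← Real.exp_add]; congr 1; ring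
    have hstep1 : Real.exp (-π * t * ((n:ℝ)^2 + 3*n + 2))
        ≤ Real.exp (-(2*π)) * Real.exp (-π * ((n:ℝ)^2 + 3*n)) := by
      rw [← Real.exp_add]
      apply Real.exp_le_exp.mpr
      nlinarith [mul_le_mul_of_nonneg_right ht (by positivity : (0:ℝ) ≤ (n:ℝ)^2 + 3*n + 2)]
    have hstep2 : ((n:ℝ) + 3/2) * Real.exp (-π * ((n:ℝ)^2 + 3*n)) ≤ (3/2) * (1/1000:ℝ) ^ n := by
      have ha : ((n:ℝ) + 3/2) ≤ (3/2) * Real.exp n := by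
        have h := Real.add_one_le_exp (n : ℝ)
        nlinarith [Real.exp_pos (n:ℝ)]
      have hb : ((1000:ℝ)) ^ n ≤ Real.exp (7 * n) := by
        rw [mul_comm, Real.exp_nat_mul]
        exact pow_le_pow_left₀ (by norm_num) thousand_le_exp_seven n
      have hc : Real.exp ((n:ℝ)) * Real.exp (7 * n) ≤ Real.exp (π * ((n:ℝ)^2 + 3*n)) := by
        rw [← Real.exp_add]
        apply Real.exp_le_exp.mpr
        nlinarith [sq_nonneg ((n:ℝ)), mul_nonneg hn0 hn0]
      have key : ((n:ℝ) + 3/2) * (1000:ℝ) ^ n ≤ (3/2) * Real.exp (π * ((n:ℝ)^2 + 3*n)) := by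
        calc ((n:ℝ) + 3/2) * (1000:ℝ) ^ n ≤ ((3/2) * Real.exp n) * Real.exp (7 * n) :=
              mul_le_mul ha hb (by positivity) (by positivity)
          _ = (3/2) * (Real.exp (n:ℝ) * Real.exp (7 * n)) := by ring
          _ ≤ (3/2) * Real.exp (π * ((n:ℝ)^2 + 3*n)) := by linarith [hc]
      have hpow : (0:ℝ) < (1000:ℝ) ^ n := by positivity
      have hinv : (0:ℝ) < ((1000:ℝ) ^ n)⁻¹ := by positivity
      have hmul : (1000:ℝ)^n * ((1000:ℝ)^n)⁻¹ = 1 := mul_inv_cancel₀ (ne_of_gt hpow)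
      rw [show (-π * ((n:ℝ)^2 + 3*n)) = -(π * ((n:ℝ)^2 + 3*n)) by ring, Real.exp_neg,
        show ((1:ℝ)/1000) ^ n = ((1000:ℝ) ^ n)⁻¹ by rw [one_div, inv_pow]]
      have hexppos : (0:ℝ) < Real.exp (π * ((n:ℝ)^2 + 3*n)) := Real.exp_pos _
      have hk2 := mul_le_mul_of_nonneg_right key hinv.le
      rw [mul_assoc, hmul, mul_one] at hk2
      have hee : Real.exp (π * ((n:ℝ)^2 + 3*n)) * (Real.exp (π * ((n:ℝ)^2 + 3*n)))⁻¹ = 1 :=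
        mul_inv_cancel₀ hexppos.ne'
      nlinarith [mul_le_mul_of_nonneg_right hk2 (inv_nonneg.mpr hexppos.le), hee]
    calc ((n : ℝ) + 3/2) * Real.exp (-π * t * ((n : ℝ) + 3/2) ^ 2)
        = E * (Real.exp (-π * t * ((n:ℝ)^2 + 3*n + 2)) * ((n:ℝ) + 3/2)) := by
          rw [hsplit2]; ring
      _ ≤ E * ((Real.exp (-(2*π)) * Real.exp (-π * ((n:ℝ)^2 + 3*n))) * ((n:ℝ) + 3/2)) := by
          apply mul_le_mul_of_nonneg_left _ hEpos.le
          apply mul_le_mul_of_nonneg_right hstep1 (by positivity)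
      _ = E * (Real.exp (-(2*π)) * (((n:ℝ) + 3/2) * Real.exp (-π * ((n:ℝ)^2 + 3*n)))) := by ring
      _ ≤ E * (Real.exp (-(2*π)) * ((3/2) * (1/1000:ℝ) ^ n)) := by
          apply mul_le_mul_of_nonneg_left _ hEpos.le
          exact mul_le_mul_of_nonneg_left hstep2 (Real.exp_pos _).le
      _ = E * C * (1/1000 : ℝ) ^ n := by rw [hC]; ring
  have hsumtail : Summable fun n : ℕ => f ((n : ℕ) + 1) := by
    have := (summable_nat_add_iff 1).mpr hsumnat
    push_cast at this ⊢
    exact this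
  have hgeom : Summable fun n : ℕ => E * C * (1/1000 : ℝ) ^ n := by
    apply Summable.mul_left
    exact summable_geometric_of_lt_one (by norm_num) (by norm_num)
  have hT : |∑' n : ℕ, f ((n : ℕ) + 1)| ≤ E * C * (1000/999) := by
    calc |∑' n : ℕ, f ((n : ℕ) + 1)| ≤ ∑' n : ℕ, |f ((n : ℕ) + 1)| := by
          simpa using norm_tsum_le_tsum_norm (hsumtail.norm)
      _ ≤ ∑' n : ℕ, E * C * (1/1000 : ℝ) ^ n :=
          Summable.tsum_le_tsum htail (hsumtail.abs) hgeom
      _ = E * C * (1000/999) := by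
          rw [tsum_mul_left, tsum_geometric_of_lt_one (by norm_num) (by norm_num)]
          norm_num
  -- numeric: C * 1000/999 ≤ 1/350
  have hCnum : C * (1000/999) ≤ 1/350 := by
    have h1 : Real.exp (-(2*π)) ≤ 1/526 := by
      have hpos : (0:ℝ) < 526 := by norm_num
      calc Real.exp (-(2*π)) = (Real.exp (2*π))⁻¹ := Real.exp_neg _
        _ ≤ (526:ℝ)⁻¹ := by
            apply inv_anti₀ hpos exp_two_pi_ge
        _ = 1/526 := by norm_num
    rw [hC]
    nlinarith [Real.exp_pos (-(2*π))]
  set T := ∑' n : ℕ, f ((n : ℕ) + 1) with hTdef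
  have hTbound : |T| ≤ E / 350 := by
    calc |T| ≤ E * C * (1000/999) := hT
      _ = E * (C * (1000/999)) := by ring
      _ ≤ E * (1/350) := mul_le_mul_of_nonneg_left hCnum hEpos.le
      _ = E / 350 := by ring
  have habs := abs_le.mp hTbound
  have hfinal : (1 - 1/175) * E ≤ ∑' k : ℤ, f k := by
    rw [htsum, hsplit, hf0]
    linarith [habs.1]
  calc 2 * π * (1 - 1 / 175) * E = 2 * π * ((1 - 1/175) * E) := by ring
    _ ≤ 2 * π * ∑' k : ℤ, f k := by
        apply mul_le_mul_of_nonneg_left hfinal (by positivity)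
end

section
/- For t ≥ 1, one has 4π Σ_{k∈ℤ} (k+1/2)² e^{-π t (k+1/2)²} ≤ 2π (1 + 1/55) e^{-π t/4}. -/
open Real

private lemma exp_neg_two_pi_le : Real.exp (-(2*π)) ≤ 1/512 := by
  have hlog : (9:ℝ) * Real.log 2 ≤ 2 * π := by
    nlinarith [Real.log_two_lt_d9, Real.pi_gt_d6]
  have h1 : Real.exp (-(2*π)) ≤ Real.exp (-(9 * Real.log 2)) :=
    Real.exp_le_exp.mpr (by linarith)
  have h2 : Real.exp (-(9 * Real.log 2)) = 1/512 := by
    rw [Real.exp_neg, show ((9:ℝ)) = ((9:ℕ):ℝ) by norm_num, Real.exp_nat_mul,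
      Real.exp_log two_pos]
    norm_num
  linarith

private lemma three_half_pow_bound (n : ℕ) : ((n:ℝ) + 3/2) ≤ (3/2) * 2^n := by
  induction n with
  | zero => norm_num
  | succ k ih =>
    have h2 : (1:ℝ) ≤ 2^k := one_le_pow₀ (by norm_num)
    push_cast
    push_cast at ih
    rw [pow_succ]
    nlinarith

theorem theta2_second_derivative_upper_bound (t : ℝ) (ht : 1 ≤ t) :
    4 * π * (∑' k : ℤ, ((k : ℝ) + 1 / 2) ^ 2 * Real.exp (-π * t * ((k : ℝ) + 1 / 2) ^ 2)) ≤
      2 * π * (1 + 1 / 55) * Real.exp (-π * t / 4) := by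
  have hπ := Real.pi_gt_d6
  have hπ0 : (0:ℝ) < π := by linarith
  set g : ℕ → ℝ := fun n => ((n:ℝ) + 1/2)^2 * Real.exp (-π * t * ((n:ℝ) + 1/2)^2) with hg
  -- summability of g
  have hr : ‖Real.exp (-π)‖ < 1 := by
    rw [Real.norm_eq_abs, abs_of_pos (Real.exp_pos _)]
    exact Real.exp_lt_one_iff.mpr (by linarith)
  have hbsum : Summable (fun n : ℕ => ((n:ℝ)+1)^2 * Real.exp (-π)^n) := by
    have h2 := summable_pow_mul_geometric_of_norm_lt_one (R := ℝ) 2 hr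
    have h1 := summable_pow_mul_geometric_of_norm_lt_one (R := ℝ) 1 hr
    have h0 := summable_geometric_of_norm_lt_one hr
    refine (h2.add ((h1.mul_left 2).add h0)).congr fun n => ?_
    push_cast; ring
  have hgsum : Summable g := by
    refine Summable.of_nonneg_of_le (fun n => by positivity) (fun n => ?_) hbsum
    have hn : (0:ℝ) ≤ (n:ℝ) := n.cast_nonneg
    have hA : ((n:ℝ)+1/2)^2 ≤ ((n:ℝ)+1)^2 := by nlinarith
    have hE : Real.exp (-π * t * ((n:ℝ)+1/2)^2) ≤ Real.exp (-π) ^ n := by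
      rw [← Real.exp_nat_mul]
      apply Real.exp_le_exp.mpr
      nlinarith [mul_nonneg (sub_nonneg.2 ht) (sq_nonneg ((n:ℝ)+1/2)), sq_nonneg ((n:ℝ))]
    exact mul_le_mul hA hE (Real.exp_pos _).le (by positivity)
  -- pairing: negative side equals g
  have hnegfun : (fun n : ℕ => (((-((n:ℤ)+1) : ℤ):ℝ) + 1/2)^2 *
      Real.exp (-π * t * (((-((n:ℤ)+1):ℤ):ℝ) + 1/2)^2)) = g := by
    funext n
    have h : (((-((n:ℤ)+1) : ℤ):ℝ) + 1/2)^2 = ((n:ℝ) + 1/2)^2 := by push_cast; ring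
    rw [hg]; rw [h]
  have hnat : (fun n : ℕ => (((n:ℤ):ℝ) + 1/2)^2 *
      Real.exp (-π * t * (((n:ℤ):ℝ) + 1/2)^2)) = g := by
    funext n; push_cast; rfl
  have hZ : (∑' k : ℤ, ((k:ℝ)+1/2)^2 * Real.exp (-π*t*((k:ℝ)+1/2)^2)) = 2 * ∑' n : ℕ, g n := by
    rw [tsum_of_nat_of_neg_add_one (by rw [hnat]; exact hgsum) (by rw [hnegfun]; exact hgsum),
      hnat, hnegfun]
    ring
  -- tail bound
  have h3le : Real.exp (-(3*π)) ≤ 1/512 :=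
    le_trans (Real.exp_le_exp.mpr (by linarith)) exp_neg_two_pi_le
  have hq0 : (0:ℝ) ≤ 4 * Real.exp (-(3*π)) := by positivity
  have hq1 : 4 * Real.exp (-(3*π)) < 1 := by linarith
  have htail : (∑' n : ℕ, g (n+1)) ≤
      Real.exp (-π*t/4) * (Real.exp (-(2*π)) * (9/4) * (1 - 4*Real.exp (-(3*π)))⁻¹) := by
    have hb : Summable (fun n : ℕ =>
        Real.exp (-π*t/4) * Real.exp (-(2*π)) * (9/4) * (4*Real.exp (-(3*π)))^n) :=
      (summable_geometric_of_lt_one hq0 hq1).mul_left _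
    have hle : ∀ n : ℕ, g (n+1) ≤
        Real.exp (-π*t/4) * Real.exp (-(2*π)) * (9/4) * (4*Real.exp (-(3*π)))^n := by
      intro n
      have hn : (0:ℝ) ≤ (n:ℝ) := n.cast_nonneg
      have hp := three_half_pow_bound n
      have h2p : (0:ℝ) < 2^n := by positivity
      have hA : (((n:ℕ)+1:ℕ):ℝ) + 1/2 = (n:ℝ) + 3/2 := by push_cast; ring
      have hA2 : ((n:ℝ)+3/2)^2 ≤ (9/4) * 4^n := by
        have h4 : ((2:ℝ)^n)^2 = 4^n := by
          rw [← pow_mul, pow_mul']; norm_num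
        nlinarith
      have hE : Real.exp (-π * t * ((n:ℝ)+3/2)^2) ≤
          Real.exp (-π*t/4) * Real.exp (-(2*π)) * Real.exp (-(3*π)) ^ n := by
        rw [← Real.exp_nat_mul, ← Real.exp_add, ← Real.exp_add]
        apply Real.exp_le_exp.mpr
        have key : (0:ℝ) ≤ (t - 1) * ((n:ℝ)^2 + 3*(n:ℝ) + 2) := by nlinarith
        nlinarith [sq_nonneg ((n:ℝ)), mul_nonneg hπ0.le key]
      have := mul_le_mul hA2 hE (Real.exp_pos _).le (by positivity)
      calc g (n+1) = ((n:ℝ)+3/2)^2 * Real.exp (-π * t * ((n:ℝ)+3/2)^2) := by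
            rw [hg]; push_cast; ring_nf
        _ ≤ (9/4) * 4^n * (Real.exp (-π*t/4) * Real.exp (-(2*π)) * Real.exp (-(3*π)) ^ n) := this
        _ = Real.exp (-π*t/4) * Real.exp (-(2*π)) * (9/4) * (4*Real.exp (-(3*π)))^n := by
            rw [mul_pow]; ring
    calc (∑' n : ℕ, g (n+1)) ≤ ∑' n : ℕ,
          Real.exp (-π*t/4) * Real.exp (-(2*π)) * (9/4) * (4*Real.exp (-(3*π)))^n :=
        Summable.tsum_le_tsum hle ((summable_nat_add_iff 1).mpr hgsum) hb
      _ = Real.exp (-π*t/4) * Real.exp (-(2*π)) * (9/4) * (1 - 4*Real.exp (-(3*π)))⁻¹ := by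
          rw [tsum_mul_left, tsum_geometric_of_lt_one hq0 hq1]
      _ = _ := by ring
  -- numeric bound
  have hnum : Real.exp (-(2*π)) * (9/4) * (1 - 4*Real.exp (-(3*π)))⁻¹ ≤ 1/220 := by
    have hden : (127:ℝ)/128 ≤ 1 - 4*Real.exp (-(3*π)) := by linarith
    have hinv : (1 - 4*Real.exp (-(3*π)))⁻¹ ≤ 128/127 := by
      rw [inv_le_comm₀ (by linarith) (by norm_num)]
      linarith
    have h2 := exp_neg_two_pi_le
    have hinv0 : (0:ℝ) ≤ (1 - 4*Real.exp (-(3*π)))⁻¹ := by positivity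
    nlinarith [Real.exp_pos (-(2*π))]
  have hg0 : g 0 = (1/4) * Real.exp (-π*t/4) := by
    rw [hg]
    norm_num
    ring
  rw [hZ, Summable.tsum_eq_zero_add hgsum, hg0]
  have hE0 := Real.exp_pos (-π*t/4)
  have hT : (∑' n : ℕ, g (n+1)) ≤ Real.exp (-π*t/4) * (1/220) :=
    htail.trans (mul_le_mul_of_nonneg_left hnum hE0.le)
  nlinarith [mul_le_mul_of_nonneg_left hT hπ0.le]
end

section
/- For a fixed α > 0 and a lattice parametrized by (x,y) with x = 1/2 and y > 0, the centered lattice theta function θᶜ(α) = Σ_{k,l∈ℤ} e^{-(πα/y)((k+1/2)² + 2x(k+1/2)(l+1/2) + (x²+y²)(l+1/2)²)} factorizes as θᶜ(α) = (1/2) θ₂(α y) θ₂(α/(4y)). -/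
open Real

private lemma gauss_summable (s a : ℝ) (hs : 0 < s) :
    Summable fun k : ℤ => Real.exp (-π * s * ((k : ℝ) + a) ^ 2) := by
  apply (HurwitzKernelBounds.summable_f_int 0 a hs).congr
  intro n
  rw [HurwitzKernelBounds.f_int, pow_zero, one_mul]
  congr 1
  ring

private def evenEquiv : ℤ ≃ ↥{j : ℤ | Even j} where
  toFun k := ⟨2 * k, show Even (2 * k) from ⟨k, by ring⟩⟩
  invFun j := j.1 / 2
  left_inv k := by show 2 * k / 2 = k; omega
  right_inv j := by
    obtain ⟨r, hr⟩ := j.2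
    apply Subtype.ext
    show 2 * (j.1 / 2) = j.1
    omega

private def oddEquiv : ℤ ≃ ↥({j : ℤ | Even j}ᶜ) where
  toFun k := ⟨2 * k + 1, show ¬ Even (2 * k + 1) from
    Int.not_even_iff_odd.mpr ⟨k, by ring⟩⟩
  invFun j := j.1 / 2
  left_inv k := by show (2 * k + 1) / 2 = k; omega
  right_inv j := by
    have hj : ¬ Even j.1 := j.2
    rw [Int.not_even_iff_odd] at hj
    obtain ⟨r, hr⟩ := hj
    apply Subtype.ext
    show 2 * (j.1 / 2) + 1 = j.1
    omega

/-- The sum over `2k + c` is independent of the integer `c`. -/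
private lemma shift_eq (s : ℝ) (c : ℤ) :
    ∑' k : ℤ, Real.exp (-π * s * (2 * (k : ℝ) + c + 1 / 2) ^ 2) =
      ∑' k : ℤ, Real.exp (-π * s * (2 * (k : ℝ) + 1 / 2) ^ 2) := by
  set F : ℤ → ℝ := fun k => Real.exp (-π * s * (2 * (k : ℝ) + 1 / 2) ^ 2) with hF
  rcases Int.even_or_odd c with ⟨d, hd⟩ | ⟨d, hd⟩
  · calc ∑' k : ℤ, Real.exp (-π * s * (2 * (k : ℝ) + c + 1 / 2) ^ 2)
        = ∑' k : ℤ, F ((Equiv.addRight d) k) := by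
          refine tsum_congr fun k => congrArg Real.exp ?_
          simp only [hF, Equiv.coe_addRight, hd]
          push_cast
          ring
      _ = ∑' k : ℤ, F k := (Equiv.addRight d).tsum_eq F
  · calc ∑' k : ℤ, Real.exp (-π * s * (2 * (k : ℝ) + c + 1 / 2) ^ 2)
        = ∑' k : ℤ, F (((Equiv.neg ℤ).trans (Equiv.subRight (d + 1))) k) := by
          refine tsum_congr fun k => congrArg Real.exp ?_
          simp only [hF, Equiv.trans_apply, Equiv.neg_apply, Equiv.subRight_apply, hd]
          push_cast
          ring
      _ = ∑' k : ℤ, F k := ((Equiv.neg ℤ).trans (Equiv.subRight (d + 1))).tsum_eq F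

/-- Splitting a half-integer theta sum into even and odd parts. -/
private lemma half_eq (s : ℝ) (hs : 0 < s) :
    ∑' j : ℤ, Real.exp (-π * s * ((j : ℝ) + 1 / 2) ^ 2) =
      2 * ∑' k : ℤ, Real.exp (-π * s * (2 * (k : ℝ) + 1 / 2) ^ 2) := by
  set f : ℤ → ℝ := fun j => Real.exp (-π * s * ((j : ℝ) + 1 / 2) ^ 2) with hf
  have hsum : Summable f := gauss_summable s (1 / 2) hs
  have hsplit := Summable.tsum_subtype_add_tsum_subtype_compl hsum {j : ℤ | Even j}
  have he : ∑' (x : ↥{j : ℤ | Even j}), f x =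
      ∑' k : ℤ, Real.exp (-π * s * (2 * (k : ℝ) + 1 / 2) ^ 2) := by
    rw [← evenEquiv.tsum_eq fun x : ↥{j : ℤ | Even j} => f x.1]
    refine tsum_congr fun k => congrArg Real.exp ?_
    simp only [hf, evenEquiv, Equiv.coe_fn_mk]
    push_cast
    ring
  have ho : ∑' (x : ↥({j : ℤ | Even j}ᶜ)), f x =
      ∑' k : ℤ, Real.exp (-π * s * (2 * (k : ℝ) + ((1 : ℤ) : ℝ) + 1 / 2) ^ 2) := by
    rw [← oddEquiv.tsum_eq fun x : ↥({j : ℤ | Even j}ᶜ) => f x.1]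
    refine tsum_congr fun k => congrArg Real.exp ?_
    simp only [hf, oddEquiv, Equiv.coe_fn_mk]
    push_cast
    ring
  rw [← hsplit, he, ho, shift_eq s 1]
  ring

theorem theta_c_factorization (α y : ℝ) (hα : 0 < α) (hy : 0 < y) :
    (∑' p : ℤ × ℤ,
        Real.exp (-(π * α / y) * (((p.1 : ℝ) + 1 / 2) ^ 2 +
          2 * (1 / 2) * ((p.1 : ℝ) + 1 / 2) * ((p.2 : ℝ) + 1 / 2) +
          ((1 / 2 : ℝ) ^ 2 + y ^ 2) * ((p.2 : ℝ) + 1 / 2) ^ 2))) =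
      (1 / 2) * (∑' k : ℤ, Real.exp (-π * (α * y) * ((k : ℝ) + 1 / 2) ^ 2)) *
        ∑' k : ℤ, Real.exp (-π * (α / (4 * y)) * ((k : ℝ) + 1 / 2) ^ 2) := by
  have hy' : y ≠ 0 := ne_of_gt hy
  -- the factorized summand, with coordinates swapped (`l` first)
  set g : ℤ × ℤ → ℝ := fun q =>
    Real.exp (-π * (α * y) * ((q.1 : ℝ) + 1 / 2) ^ 2) *
      Real.exp (-π * (α / (4 * y)) * (2 * (q.2 : ℝ) + q.1 + 1 + 1 / 2) ^ 2) with hg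
  -- Step 1: pointwise factorization (completing the square)
  have hfact : ∀ p : ℤ × ℤ,
      Real.exp (-(π * α / y) * (((p.1 : ℝ) + 1 / 2) ^ 2 +
        2 * (1 / 2) * ((p.1 : ℝ) + 1 / 2) * ((p.2 : ℝ) + 1 / 2) +
        ((1 / 2 : ℝ) ^ 2 + y ^ 2) * ((p.2 : ℝ) + 1 / 2) ^ 2)) = g (p.2, p.1) := by
    intro p
    simp only [hg, ← Real.exp_add]
    apply congrArg Real.exp
    field_simp
    ring
  -- Step 2: each inner sum
  have hinner : ∀ l : ℤ,
      (∑' k : ℤ, g (l, k)) =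
        Real.exp (-π * (α * y) * ((l : ℝ) + 1 / 2) ^ 2) *
          ((1 / 2) * ∑' k : ℤ, Real.exp (-π * (α / (4 * y)) * ((k : ℝ) + 1 / 2) ^ 2)) := by
    intro l
    simp only [hg]
    rw [tsum_mul_left]
    congr 1
    have h1 : (∑' k : ℤ, Real.exp (-π * (α / (4 * y)) *
          (2 * (k : ℝ) + (l : ℝ) + 1 + 1 / 2) ^ 2)) =
        ∑' k : ℤ, Real.exp (-π * (α / (4 * y)) *
          (2 * (k : ℝ) + ((l + 1 : ℤ) : ℝ) + 1 / 2) ^ 2) := by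
      refine tsum_congr fun k => congrArg Real.exp ?_
      push_cast
      ring
    rw [h1, shift_eq (α / (4 * y)) (l + 1), half_eq (α / (4 * y)) (by positivity)]
    ring
  -- summability of each inner sum
  have hinnerS : ∀ l : ℤ, Summable fun k : ℤ => g (l, k) := by
    intro l
    simp only [hg]
    apply Summable.mul_left
    apply (gauss_summable (α / y) (((l : ℝ) + 1 + 1 / 2) / 2) (by positivity)).congr
    intro k
    apply congrArg Real.exp
    field_simp
    ring
  -- summability of the double sum
  have hgS : Summable g := by
    rw [summable_prod_of_nonneg (fun q => by simp only [hg]; positivity)]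
    refine ⟨fun l => hinnerS l, ?_⟩
    have : Summable fun l : ℤ =>
        Real.exp (-π * (α * y) * ((l : ℝ) + 1 / 2) ^ 2) *
          ((1 / 2) * ∑' k : ℤ, Real.exp (-π * (α / (4 * y)) * ((k : ℝ) + 1 / 2) ^ 2)) :=
      (gauss_summable (α * y) (1 / 2) (by positivity)).mul_right _
    exact this.congr fun l => (hinner l).symm
  -- put it all together
  calc (∑' p : ℤ × ℤ,
        Real.exp (-(π * α / y) * (((p.1 : ℝ) + 1 / 2) ^ 2 +
          2 * (1 / 2) * ((p.1 : ℝ) + 1 / 2) * ((p.2 : ℝ) + 1 / 2) +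
          ((1 / 2 : ℝ) ^ 2 + y ^ 2) * ((p.2 : ℝ) + 1 / 2) ^ 2)))
      = ∑' p : ℤ × ℤ, g ((Equiv.prodComm ℤ ℤ) p) := tsum_congr fun p => hfact p
    _ = ∑' q : ℤ × ℤ, g q := (Equiv.prodComm ℤ ℤ).tsum_eq g
    _ = ∑' (l : ℤ) (k : ℤ), g (l, k) := Summable.tsum_prod' hgS hinnerS
    _ = ∑' l : ℤ, Real.exp (-π * (α * y) * ((l : ℝ) + 1 / 2) ^ 2) *
          ((1 / 2) * ∑' k : ℤ, Real.exp (-π * (α / (4 * y)) * ((k : ℝ) + 1 / 2) ^ 2)) :=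
        tsum_congr hinner
    _ = (∑' l : ℤ, Real.exp (-π * (α * y) * ((l : ℝ) + 1 / 2) ^ 2)) *
          ((1 / 2) * ∑' k : ℤ, Real.exp (-π * (α / (4 * y)) * ((k : ℝ) + 1 / 2) ^ 2)) :=
        tsum_mul_right
    _ = (1 / 2) * (∑' k : ℤ, Real.exp (-π * (α * y) * ((k : ℝ) + 1 / 2) ^ 2)) *
        ∑' k : ℤ, Real.exp (-π * (α / (4 * y)) * ((k : ℝ) + 1 / 2) ^ 2) := by ring
end

section
/- For fixed t > 0, the function y ↦ θ₂(t y) θ₂(t/y) on (0,∞) attains its maximum exactly at y = 1; in particular θ₂(t y) θ₂(t/y) ≤ θ₂(t)² for all y > 0, with equality iff y = 1. -/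
open Real Set

noncomputable section FS2

namespace FS2

/-- The weight `(k+1/2)^2`. -/
def c (k : ℤ) : ℝ := ((k : ℝ) + 1/2)^2

lemma c_quarter (k : ℤ) : 1/4 ≤ c k := by
  unfold c
  rcases le_or_gt 0 k with h | h
  · have : (0:ℝ) ≤ (k:ℝ) := by exact_mod_cast h
    nlinarith
  · have hk : (k:ℤ) ≤ -1 := by omega
    have : (k:ℝ) ≤ -1 := by exact_mod_cast hk
    nlinarith

lemma c_pos (k : ℤ) : 0 < c k := lt_of_lt_of_le (by norm_num) (c_quarter k)

lemma c_cases (k : ℤ) : c k = 1/4 ∨ 9/4 ≤ c k := by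
  have h : (k = 0 ∨ k = -1) ∨ (1 ≤ k ∨ k ≤ -2) := by omega
  rcases h with (rfl | rfl) | h
  · left; norm_num [c]
  · left; norm_num [c]
  · right
    unfold c
    rcases h with h | h
    · have : (1:ℝ) ≤ (k:ℝ) := by exact_mod_cast h
      nlinarith
    · have : (k:ℝ) ≤ -2 := by exact_mod_cast h
      nlinarith

lemma c_sum_of_ne {j k : ℤ} (h : c j ≠ c k) : 5/2 ≤ c j + c k := by
  rcases c_cases j with hj | hj <;> rcases c_cases k with hk | hk
  · exact absurd (hj.trans hk.symm) h
  · linarith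
  · linarith
  · linarith

/-- `t ≤ exp (t/2)` for `0 ≤ t`. -/
lemma le_exp_half {t : ℝ} (h : 0 ≤ t) : t ≤ exp (t/2) := by
  have h1 : t/4 + 1 ≤ exp (t/4) := add_one_le_exp _
  have h2 : (t/4 + 1)^2 ≤ (exp (t/4))^2 := by
    have : 0 ≤ t/4 + 1 := by linarith
    exact pow_le_pow_left₀ this h1 2
  have h3 : exp (t/4) ^ 2 = exp (t/2) := by
    rw [← exp_nat_mul]; ring_nf
  nlinarith [sq_nonneg (1 - t/4)]

/-- `t^2 ≤ exp t` for `0 ≤ t`. -/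
lemma sq_le_exp {t : ℝ} (h : 0 ≤ t) : t^2 ≤ exp t := by
  have h1 := le_exp_half h
  have h2 : (exp (t/2))^2 = exp t := by rw [← exp_nat_mul]; ring_nf
  calc t^2 ≤ (exp (t/2))^2 := pow_le_pow_left₀ h h1 2
  _ = exp t := h2

/-- Theta-2 function. -/
def Th (x : ℝ) : ℝ := ∑' k : ℤ, exp (-π * x * ((k:ℝ) + 1/2)^2)

lemma Th_eq (x : ℝ) : Th x = ∑' k : ℤ, exp (-π * x * c k) := rfl

/-- minus derivative of Th -/
def P1 (x : ℝ) : ℝ := ∑' k : ℤ, (π * c k) * exp (-π * x * c k)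

/-- second derivative of Th -/
def P2 (x : ℝ) : ℝ := ∑' k : ℤ, (π * c k)^2 * exp (-π * x * c k)

lemma summable_w (m : ℕ) {x : ℝ} (hx : 0 < x) :
    Summable (fun k : ℤ => (π * c k)^m * exp (-π * x * c k)) := by
  have h := (HurwitzKernelBounds.summable_f_int (2*m) (1/2) hx).mul_left (π ^ m)
  refine h.congr (fun k => ?_)
  unfold HurwitzKernelBounds.f_int
  have h1 : |(k:ℝ) + 1/2| ^ (2*m) = c k ^ m := by
    rw [pow_mul, sq_abs]; rfl
  have h2 : -π * ((k:ℝ) + 1/2)^2 * x = -π * x * c k := by unfold c; ring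
  rw [h1, h2, mul_pow]
  ring

lemma summable_exp {x : ℝ} (hx : 0 < x) : Summable (fun k : ℤ => exp (-π * x * c k)) := by
  simpa using summable_w 0 hx

lemma summable_w1 {x : ℝ} (hx : 0 < x) :
    Summable (fun k : ℤ => (π * c k) * exp (-π * x * c k)) := by
  simpa using summable_w 1 hx

lemma Th_pos {x : ℝ} (hx : 0 < x) : 0 < Th x := by
  rw [Th_eq]
  exact Summable.tsum_pos (summable_exp hx) (fun k => (exp_pos _).le) 0 (exp_pos _)

lemma P1_pos {x : ℝ} (hx : 0 < x) : 0 < P1 x := by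
  refine Summable.tsum_pos (summable_w1 hx) (fun k => le_of_lt ?_) 0 ?_
  · have := c_pos k
    positivity
  · have := c_pos 0
    positivity

lemma two_terms_le (f : ℤ → ℝ) (hf : Summable f) (hnn : ∀ k, 0 ≤ f k) :
    f 0 + f (-1) ≤ ∑' k, f k := by
  have h : ∑ k ∈ ({0, -1} : Finset ℤ), f k ≤ ∑' k, f k := by
    refine Summable.sum_le_tsum _ (fun k _ => hnn k) hf
  simpa using h

lemma Th_lower {x : ℝ} (hx : 0 < x) : 2 * exp (-π * x * (1/4)) ≤ Th x := by
  rw [Th_eq]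
  have h := two_terms_le _ (summable_exp hx) (fun k => (exp_pos _).le)
  have h0 : c 0 = 1/4 := by norm_num [c]
  have h1 : c (-1) = 1/4 := by norm_num [c]
  rw [h0, h1] at h
  linarith

lemma P1_lower {x : ℝ} (hx : 0 < x) : (π/2) * exp (-π * x * (1/4)) ≤ P1 x := by
  have h := two_terms_le _ (summable_w1 hx) (fun k => le_of_lt (by have := c_pos k; positivity))
  have h0 : c 0 = 1/4 := by norm_num [c]
  have h1 : c (-1) = 1/4 := by norm_num [c]
  rw [h0, h1] at h
  unfold P1
  have hpi : (0:ℝ) < π := pi_pos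
  nlinarith [exp_pos (-π * x * (1/4))]

lemma hasDerivAt_linear (A : ℝ) (y : ℝ) : HasDerivAt (fun z : ℝ => -π * z * A) (-π * A) y := by
  have H := (hasDerivAt_id y).const_mul (-π * A)
  simp only [id_eq, mul_one] at H
  have heq : (fun z : ℝ => -π * A * z) = fun z : ℝ => -π * z * A := by funext z; ring
  rwa [heq] at H

lemma hasDerivAt_aux (m : ℕ) {x : ℝ} (hx : 0 < x) :
    HasDerivAt (fun y => ∑' k : ℤ, (π * c k)^m * exp (-π * y * c k))
      (-∑' k : ℤ, (π * c k)^(m+1) * exp (-π * x * c k)) x := by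
  have hopen : IsOpen (Ioi (x/2)) := isOpen_Ioi
  have hconn : IsPreconnected (Ioi (x/2)) := (convex_Ioi _).isPreconnected
  have hmem : x ∈ Ioi (x/2) := by simp only [Set.mem_Ioi]; linarith
  have hu : Summable (fun k : ℤ => (π * c k)^(m+1) * exp (-π * (x/2) * c k)) :=
    summable_w (m+1) (by linarith)
  have key := hasDerivAt_tsum_of_isPreconnected hu hopen hconn
    (g := fun (k : ℤ) y => (π * c k)^m * exp (-π * y * c k))
    (g' := fun (k : ℤ) y => (π * c k)^m * (exp (-π * y * c k) * (-π * c k)))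
    (fun k y _ => ((hasDerivAt_linear (c k) y).exp).const_mul ((π * c k)^m))
    (fun k y hy => by
      have hck := c_pos k
      have hyx : x/2 ≤ y := le_of_lt hy
      have h1 : exp (-π * y * c k) ≤ exp (-π * (x/2) * c k) := by
        apply exp_le_exp.mpr
        nlinarith [mul_nonneg (mul_nonneg (sub_nonneg.mpr hyx) pi_pos.le) hck.le]
      have heq : (π * c k)^m * (exp (-π * y * c k) * (-π * c k))
          = -((π * c k)^(m+1) * exp (-π * y * c k)) := by ring
      show ‖(π * c k)^m * (exp (-π * y * c k) * (-π * c k))‖ ≤ _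
      rw [heq, norm_neg, norm_eq_abs, abs_of_nonneg (by positivity)]
      apply mul_le_mul_of_nonneg_left h1 (by positivity))
    hmem (summable_w m hx) hmem
  refine key.congr_deriv ?_
  rw [← tsum_neg]
  congr 1
  funext k
  ring

lemma hasDerivAt_Th {x : ℝ} (hx : 0 < x) : HasDerivAt Th (-(P1 x)) x := by
  have h := hasDerivAt_aux 0 hx
  simp only [pow_zero, one_mul, zero_add, pow_one] at h
  have heq : (fun y => ∑' k : ℤ, exp (-π * y * c k)) = Th := by
    funext y; rw [Th_eq]
  rw [heq] at h
  exact h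

lemma hasDerivAt_P1 {x : ℝ} (hx : 0 < x) : HasDerivAt P1 (-(P2 x)) x := by
  have h := hasDerivAt_aux 1 hx
  simp only [pow_one] at h
  exact h

lemma summable_exp_c : Summable (fun k : ℤ => exp (-c k)) := by
  have h := summable_exp (x := π⁻¹) (by positivity)
  refine h.congr (fun k => ?_)
  congr 1
  have : π ≠ 0 := ne_of_gt pi_pos
  field_simp

set_option maxHeartbeats 1000000 in
/-- Fubini-type identity for the variance numerator. -/
lemma sq_diff_identity {x : ℝ} (hx : 0 < x) :
    2*(P2 x * Th x - P1 x^2) =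
      ∑' p : ℤ×ℤ, (π*c p.1 - π*c p.2)^2 * (exp (-π*x*c p.1) * exp (-π*x*c p.2)) := by
  have s0 : Summable (fun k : ℤ => exp (-π*x*c k)) := summable_exp hx
  have s1 : Summable (fun k : ℤ => (π*c k) * exp (-π*x*c k)) := summable_w1 hx
  have s2 : Summable (fun k : ℤ => (π*c k)^2 * exp (-π*x*c k)) := by
    simpa using summable_w 2 hx
  have n0 : ∀ k : ℤ, 0 ≤ exp (-π*x*c k) := fun k => (exp_pos _).le
  have n1 : ∀ k : ℤ, 0 ≤ (π*c k) * exp (-π*x*c k) := fun k => by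
    have := c_pos k; positivity
  have n2 : ∀ k : ℤ, 0 ≤ (π*c k)^2 * exp (-π*x*c k) := fun k => by positivity
  have ns0 : Summable (fun k : ℤ => ‖exp (-π*x*c k)‖) := by
    refine s0.congr (fun k => ?_); rw [norm_of_nonneg (n0 k)]
  have ns1 : Summable (fun k : ℤ => ‖(π*c k) * exp (-π*x*c k)‖) := by
    refine s1.congr (fun k => ?_); rw [norm_of_nonneg (n1 k)]
  have ns2 : Summable (fun k : ℤ => ‖(π*c k)^2 * exp (-π*x*c k)‖) := by
    refine s2.congr (fun k => ?_); rw [norm_of_nonneg (n2 k)]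
  have h20 : P2 x * Th x = ∑' p : ℤ×ℤ,
      ((π*c p.1)^2 * exp (-π*x*c p.1)) * exp (-π*x*c p.2) := by
    rw [show P2 x = ∑' k : ℤ, (π*c k)^2 * exp (-π*x*c k) from rfl, Th_eq]
    exact tsum_mul_tsum_of_summable_norm (f := fun k : ℤ => (π*c k)^2 * exp (-π*x*c k))
      (g := fun k : ℤ => exp (-π*x*c k)) ns2 ns0
  have h02 : Th x * P2 x = ∑' p : ℤ×ℤ,
      exp (-π*x*c p.1) * ((π*c p.2)^2 * exp (-π*x*c p.2)) := by
    rw [show P2 x = ∑' k : ℤ, (π*c k)^2 * exp (-π*x*c k) from rfl, Th_eq]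
    exact tsum_mul_tsum_of_summable_norm (f := fun k : ℤ => exp (-π*x*c k))
      (g := fun k : ℤ => (π*c k)^2 * exp (-π*x*c k)) ns0 ns2
  have h11 : P1 x * P1 x = ∑' p : ℤ×ℤ,
      ((π*c p.1) * exp (-π*x*c p.1)) * ((π*c p.2) * exp (-π*x*c p.2)) := by
    rw [show P1 x = ∑' k : ℤ, (π*c k) * exp (-π*x*c k) from rfl]
    exact tsum_mul_tsum_of_summable_norm (f := fun k : ℤ => (π*c k) * exp (-π*x*c k))
      (g := fun k : ℤ => (π*c k) * exp (-π*x*c k)) ns1 ns1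
  have S20 : Summable (fun p : ℤ×ℤ => ((π*c p.1)^2 * exp (-π*x*c p.1)) * exp (-π*x*c p.2)) :=
    s2.mul_of_nonneg s0 n2 n0
  have S02 : Summable (fun p : ℤ×ℤ => exp (-π*x*c p.1) * ((π*c p.2)^2 * exp (-π*x*c p.2))) :=
    s0.mul_of_nonneg s2 n0 n2
  have S11 : Summable (fun p : ℤ×ℤ =>
      ((π*c p.1) * exp (-π*x*c p.1)) * ((π*c p.2) * exp (-π*x*c p.2))) :=
    s1.mul_of_nonneg s1 n1 n1
  have comb : ∑' p : ℤ×ℤ, (((π*c p.1)^2 * exp (-π*x*c p.1)) * exp (-π*x*c p.2)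
        + exp (-π*x*c p.1) * ((π*c p.2)^2 * exp (-π*x*c p.2))
        - 2*(((π*c p.1) * exp (-π*x*c p.1)) * ((π*c p.2) * exp (-π*x*c p.2))))
      = P2 x * Th x + Th x * P2 x - 2 * (P1 x * P1 x) := by
    rw [Summable.tsum_sub (S20.add S02) (S11.mul_left 2), Summable.tsum_add S20 S02, tsum_mul_left, h20, h02, h11]
  have final : ∑' p : ℤ×ℤ, (((π*c p.1)^2 * exp (-π*x*c p.1)) * exp (-π*x*c p.2)
        + exp (-π*x*c p.1) * ((π*c p.2)^2 * exp (-π*x*c p.2))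
        - 2*(((π*c p.1) * exp (-π*x*c p.1)) * ((π*c p.2) * exp (-π*x*c p.2))))
      = ∑' p : ℤ×ℤ, (π*c p.1 - π*c p.2)^2 * (exp (-π*x*c p.1) * exp (-π*x*c p.2)) := by
    exact tsum_congr (fun p => by ring)
  rw [← final, comb]
  ring

lemma G_le_five : ∑' k : ℤ, exp (-c k) ≤ 5 := by
  have hs := summable_exp_c.hasSum
  have hnat := hs.nat_add_neg
  have hle1 : ∑' k : ℤ, exp (-c k) ≤ (∑' k : ℤ, exp (-c k)) + exp (-c 0) := by
    nlinarith [exp_pos (-c 0)]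
  have h0 := hnat.tsum_eq
  -- `∑' n : ℕ, (exp (-c n) + exp (-c (-n))) = G + exp (-c 0)`
  have hgeo : ∀ n : ℕ, exp (-c (n:ℤ)) + exp (-c (-(n:ℤ))) ≤ (exp (-(1/4)) + exp (3/4)) * exp (-(1:ℝ))^n := by
    intro n
    have hn : (0:ℝ) ≤ n := Nat.cast_nonneg n
    have e1 : exp (-c (n:ℤ)) ≤ exp (-(1/4)) * exp (-(1:ℝ))^n := by
      rw [← exp_nat_mul, ← exp_add]
      apply exp_le_exp.mpr
      unfold c
      push_cast
      nlinarith [sq_nonneg ((n:ℝ))]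
    have e2 : exp (-c (-(n:ℤ))) ≤ exp (3/4) * exp (-(1:ℝ))^n := by
      rw [← exp_nat_mul, ← exp_add]
      apply exp_le_exp.mpr
      unfold c
      push_cast
      nlinarith [sq_nonneg ((n:ℝ) - 1)]
    nlinarith [e1, e2]
  have hsum_geo : Summable (fun n : ℕ => (exp (-(1/4)) + exp (3/4)) * exp (-(1:ℝ))^n) := by
    apply Summable.mul_left
    apply summable_geometric_of_lt_one (exp_pos _).le
    rw [exp_lt_one_iff]; norm_num
  have hsum_f : Summable (fun n : ℕ => exp (-c (n:ℤ)) + exp (-c (-(n:ℤ)))) := hnat.summable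
  have htsum_le := Summable.tsum_le_tsum hgeo hsum_f hsum_geo
  rw [h0] at htsum_le
  rw [tsum_mul_left, tsum_geometric_of_lt_one (exp_pos _).le (by rw [exp_lt_one_iff]; norm_num)]
    at htsum_le
  -- numeric bound
  have he1 : (2.7182818283 : ℝ) < exp 1 := exp_one_gt_d9
  have he2 : exp 1 < 2.7182818286 := exp_one_lt_d9
  have hq : (1.25:ℝ) ≤ exp (1/4) := by
    have := add_one_le_exp (1/4 : ℝ); linarith
  have hqpos : (0:ℝ) < exp (1/4) := exp_pos _
  have h34 : exp (3/4) * exp (1/4) = exp 1 := by rw [← exp_add]; norm_num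
  have h34' : exp (3/4) ≤ 2.175 := by nlinarith
  have hm14 : exp (-(1/4)) * exp (1/4) = 1 := by rw [← exp_add]; norm_num
  have hm14' : exp (-(1/4)) ≤ 0.8 := by nlinarith
  have hm1 : exp (-(1:ℝ)) * exp 1 = 1 := by rw [← exp_add]; norm_num
  have hm1' : exp (-(1:ℝ)) ≤ 0.369 := by nlinarith
  have hm1pos : (0:ℝ) < exp (-(1:ℝ)) := exp_pos _
  have hinv : (1 - exp (-(1:ℝ)))⁻¹ ≤ (1 - 0.369)⁻¹ := by
    apply inv_anti₀ <;> nlinarith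
  calc ∑' k : ℤ, exp (-c k) ≤ (∑' k : ℤ, exp (-c k)) + exp (-c 0) := hle1
    _ ≤ (exp (-(1/4)) + exp (3/4)) * (1 - exp (-(1:ℝ)))⁻¹ := htsum_le
    _ ≤ (0.8 + 2.175) * (1 - 0.369)⁻¹ := by
        apply mul_le_mul (by linarith) hinv (le_of_lt (inv_pos.mpr (by nlinarith))) (by norm_num)
    _ ≤ 5 := by norm_num

set_option maxHeartbeats 2000000 in
/-- Key estimate for the theta-2 log-derivative on `[π/2, ∞)`. -/
lemma key2 {x : ℝ} (hx : π/2 ≤ x) : x * (P2 x * Th x - P1 x ^ 2) < P1 x * Th x := by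
  have hπ3 : (3.1415:ℝ) < π := by
    have := pi_gt_d6; linarith
  have hπ4 : π < 3.1416 := by
    have := pi_lt_d6; linarith
  have hxpos : 0 < x := lt_of_lt_of_le (by linarith) hx
  have huu : π^2/2 ≤ π * x := by nlinarith
  have hu2 : (2:ℝ) ≤ π * x := by nlinarith
  -- summability setup
  have s0 : Summable (fun k : ℤ => exp (-π*x*c k)) := summable_exp hxpos
  have s1 : Summable (fun k : ℤ => (π*c k) * exp (-π*x*c k)) := summable_w1 hxpos
  have s2 : Summable (fun k : ℤ => (π*c k)^2 * exp (-π*x*c k)) := by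
    simpa using summable_w 2 hxpos
  have n0 : ∀ k : ℤ, 0 ≤ exp (-π*x*c k) := fun k => (exp_pos _).le
  have n1 : ∀ k : ℤ, 0 ≤ (π*c k) * exp (-π*x*c k) := fun k => by
    have := c_pos k; positivity
  have n2 : ∀ k : ℤ, 0 ≤ (π*c k)^2 * exp (-π*x*c k) := fun k => by positivity
  have S20 : Summable (fun p : ℤ×ℤ => ((π*c p.1)^2 * exp (-π*x*c p.1)) * exp (-π*x*c p.2)) :=
    s2.mul_of_nonneg s0 n2 n0
  have S02 : Summable (fun p : ℤ×ℤ => exp (-π*x*c p.1) * ((π*c p.2)^2 * exp (-π*x*c p.2))) :=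
    s0.mul_of_nonneg s2 n0 n2
  have S11 : Summable (fun p : ℤ×ℤ =>
      ((π*c p.1) * exp (-π*x*c p.1)) * ((π*c p.2) * exp (-π*x*c p.2))) :=
    s1.mul_of_nonneg s1 n1 n1
  have hsumL : Summable (fun p : ℤ×ℤ =>
      (π*c p.1 - π*c p.2)^2 * (exp (-π*x*c p.1) * exp (-π*x*c p.2))) := by
    refine ((S20.add S02).sub (S11.mul_left 2)).congr (fun p => by ring)
  have nsc : Summable (fun k : ℤ => ‖exp (-c k)‖) := by
    refine summable_exp_c.congr (fun k => ?_); rw [norm_of_nonneg (exp_pos _).le]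
  have hsumR : Summable (fun p : ℤ×ℤ =>
      π^2 * exp (5 - 5/2*(π*x)) * (exp (-c p.1) * exp (-c p.2))) := by
    exact (summable_exp_c.mul_of_nonneg summable_exp_c (fun k => (exp_pos _).le)
      (fun k => (exp_pos _).le)).mul_left _
  -- termwise bound
  have hterm : ∀ p : ℤ×ℤ,
      (π*c p.1 - π*c p.2)^2 * (exp (-π*x*c p.1) * exp (-π*x*c p.2))
        ≤ π^2 * exp (5 - 5/2*(π*x)) * (exp (-c p.1) * exp (-c p.2)) := by
    intro p
    by_cases hcc : c p.1 = c p.2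
    · rw [hcc]
      simp only [sub_self]
      have : ((0:ℝ))^2 * (exp (-π*x*c p.2) * exp (-π*x*c p.2)) = 0 := by ring
      rw [this]
      positivity
    · have hS : 5/2 ≤ c p.1 + c p.2 := c_sum_of_ne hcc
      have hc1 := c_pos p.1
      have hc2 := c_pos p.2
      have hexpL : exp (-π*x*c p.1) * exp (-π*x*c p.2)
          = exp (-(π*x)*(c p.1 + c p.2)) := by
        rw [← exp_add]; congr 1; ring
      have hexpR : exp (-c p.1) * exp (-c p.2) = exp (-(c p.1 + c p.2)) := by
        rw [← exp_add]; congr 1; ring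
      rw [hexpL, hexpR]
      have hsq : (π*c p.1 - π*c p.2)^2 = π^2 * (c p.1 - c p.2)^2 := by ring
      rw [hsq, mul_assoc, mul_assoc]
      apply mul_le_mul_of_nonneg_left _ (by positivity : (0:ℝ) ≤ π^2)
      -- (c₁-c₂)^2 * exp(-(u)S) ≤ exp(5-5/2 u) * exp (-S)
      have h1 : (c p.1 - c p.2)^2 ≤ (c p.1 + c p.2)^2 := by nlinarith
      have h2 : (c p.1 + c p.2)^2 ≤ exp (c p.1 + c p.2) := sq_le_exp (by linarith)
      calc (c p.1 - c p.2)^2 * exp (-(π*x)*(c p.1 + c p.2))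
          ≤ exp (c p.1 + c p.2) * exp (-(π*x)*(c p.1 + c p.2)) := by
            apply mul_le_mul_of_nonneg_right (h1.trans h2) (exp_pos _).le
        _ = exp ((c p.1 + c p.2) - (π*x)*(c p.1 + c p.2)) := by rw [← exp_add]; congr 1; ring
        _ ≤ exp ((5 - 5/2*(π*x)) + (-(c p.1 + c p.2))) := by
            apply exp_le_exp.mpr
            nlinarith [mul_nonneg (by linarith : (0:ℝ) ≤ π*x - 2) (by linarith : (0:ℝ) ≤ (c p.1 + c p.2) - 5/2)]
        _ = exp (5 - 5/2*(π*x)) * exp (-(c p.1 + c p.2)) := by rw [← exp_add]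
  -- sum the bound
  have hG : ∑' p : ℤ×ℤ, (exp (-c p.1) * exp (-c p.2))
      = (∑' k : ℤ, exp (-c k)) * (∑' k : ℤ, exp (-c k)) :=
    (tsum_mul_tsum_of_summable_norm nsc nsc).symm
  have hGnn : (0:ℝ) ≤ ∑' k : ℤ, exp (-c k) := tsum_nonneg (fun k => (exp_pos _).le)
  have hR : (∑' p : ℤ×ℤ, (π*c p.1 - π*c p.2)^2 * (exp (-π*x*c p.1) * exp (-π*x*c p.2)))
      ≤ π^2 * exp (5 - 5/2*(π*x)) * 25 := by
    calc (∑' p : ℤ×ℤ, (π*c p.1 - π*c p.2)^2 * (exp (-π*x*c p.1) * exp (-π*x*c p.2)))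
        ≤ ∑' p : ℤ×ℤ, π^2 * exp (5 - 5/2*(π*x)) * (exp (-c p.1) * exp (-c p.2)) :=
          Summable.tsum_le_tsum hterm hsumL hsumR
      _ = π^2 * exp (5 - 5/2*(π*x)) *
            ((∑' k : ℤ, exp (-c k)) * (∑' k : ℤ, exp (-c k))) := by
          rw [tsum_mul_left, hG]
      _ ≤ π^2 * exp (5 - 5/2*(π*x)) * 25 := by
          apply mul_le_mul_of_nonneg_left _ (by positivity)
          nlinarith [G_le_five]
  -- lower bound for RHS
  have hlow : π * exp (-(π*x)/2) ≤ P1 x * Th x := by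
    have h1 := P1_lower hxpos
    have h2 := Th_lower hxpos
    have hmul : ((π/2) * exp (-π*x*(1/4))) * (2 * exp (-π*x*(1/4))) ≤ P1 x * Th x := by
      apply mul_le_mul h1 h2 (by positivity) (le_of_lt (P1_pos hxpos))
    have : ((π/2) * exp (-π*x*(1/4))) * (2 * exp (-π*x*(1/4)))
        = π * exp (-(π*x)/2) := by
      rw [show exp (-(π*x)/2) = exp (-π*x*(1/4)) * exp (-π*x*(1/4)) by rw [← exp_add]; congr 1; ring]
      ring
    linarith [this ▸ hmul]
  -- numeric core : (25/2) * u * exp (5 - 2u) < 1 for u ≥ π²/2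
  have hnum : (25/2) * (π*x) * exp (5 - 2*(π*x)) < 1 := by
    have hu0 : (1:ℝ) ≤ π^2/2 := by nlinarith
    have h1 : π*x ≤ (π^2/2) * exp ((π*x) - π^2/2) := by
      nlinarith [add_one_le_exp ((π*x) - π^2/2)]
    have hC1 : (π*x) * exp (5 - 2*(π*x)) ≤ (π^2/2) * exp (5 - π^2) := by
      calc (π*x) * exp (5 - 2*(π*x))
          ≤ ((π^2/2) * exp ((π*x) - π^2/2)) * exp (5 - 2*(π*x)) := by
            apply mul_le_mul_of_nonneg_right h1 (exp_pos _).le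
        _ = (π^2/2) * exp (5 - (π*x) - π^2/2) := by
            rw [mul_assoc, ← exp_add]; congr 2; ring
        _ ≤ (π^2/2) * exp (5 - π^2) := by
            apply mul_le_mul_of_nonneg_left (exp_le_exp.mpr (by linarith)) (by positivity)
    have hC2 : (25/2) * ((π^2/2) * exp (5 - π^2)) < 1 := by
      have hmulinv : exp (5 - π^2) * exp (π^2 - 5) = 1 := by
        rw [← exp_add]; norm_num
      have he1 : (2.7182:ℝ) < exp 1 := by have := exp_one_gt_d9; linarith
      have hlow98 : (98:ℝ) ≤ exp (π^2 - 5) := by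
        have h48 : (4.8:ℝ) ≤ π^2 - 5 := by nlinarith
        have hsplit : exp (4.8:ℝ) = exp 4 * exp (0.8:ℝ) := by
          rw [← exp_add]; norm_num
        have h4 : exp (4:ℝ) = (exp 1)^4 := by
          rw [← exp_nat_mul]; norm_num
        have hp4 : (2.7182:ℝ)^4 ≤ (exp 1)^4 :=
          pow_le_pow_left₀ (by norm_num) he1.le 4
        have h08 : (1.8:ℝ) ≤ exp (0.8:ℝ) := by
          have := add_one_le_exp (0.8:ℝ); linarith
        have : (98:ℝ) ≤ exp (4.8:ℝ) := by
          rw [hsplit, h4]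
          nlinarith [exp_pos (0.8:ℝ)]
        calc (98:ℝ) ≤ exp (4.8:ℝ) := this
          _ ≤ exp (π^2 - 5) := exp_le_exp.mpr h48
      nlinarith [exp_pos (5 - π^2), hlow98, hmulinv]
    calc (25/2) * (π*x) * exp (5 - 2*(π*x))
        = (25/2) * ((π*x) * exp (5 - 2*(π*x))) := by ring
      _ ≤ (25/2) * ((π^2/2) * exp (5 - π^2)) := by
          apply mul_le_mul_of_nonneg_left hC1 (by norm_num)
      _ < 1 := hC2
  -- assemble
  have hid := sq_diff_identity hxpos
  have hmain : x * (P2 x * Th x - P1 x ^ 2)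
      ≤ x * (π^2 * exp (5 - 5/2*(π*x)) * 25 / 2) := by
    have : P2 x * Th x - P1 x ^ 2
        = (∑' p : ℤ×ℤ, (π*c p.1 - π*c p.2)^2 * (exp (-π*x*c p.1) * exp (-π*x*c p.2))) / 2 := by
      linarith
    rw [this]
    apply mul_le_mul_of_nonneg_left _ hxpos.le
    linarith
  have hfin : x * (π^2 * exp (5 - 5/2*(π*x)) * 25 / 2) < π * exp (-(π*x)/2) := by
    have hsplit : exp (5 - 5/2*(π*x)) = exp (5 - 2*(π*x)) * exp (-(π*x)/2) := by
      rw [← exp_add]; congr 1; ring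
    rw [hsplit]
    have : x * (π^2 * (exp (5 - 2*(π*x)) * exp (-(π*x)/2)) * 25 / 2)
        = ((25/2) * (π*x) * exp (5 - 2*(π*x))) * (π * exp (-(π*x)/2)) := by ring
    rw [this]
    nlinarith [mul_pos pi_pos (exp_pos (-(π*x)/2)), hnum]
  linarith

/-! ### The theta-4 side -/

def q (n : ℕ) : ℝ := (n:ℝ) + 1

lemma q_ge_one (n : ℕ) : 1 ≤ q n := by
  unfold q; have : (0:ℝ) ≤ n := Nat.cast_nonneg n; linarith

lemma q_pos (n : ℕ) : 0 < q n := lt_of_lt_of_le one_pos (q_ge_one n)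

def eps (n : ℕ) : ℝ := 2 * (-1:ℝ)^(n+1)

lemma abs_eps (n : ℕ) : |eps n| = 2 := by
  unfold eps
  rw [abs_mul, abs_pow, abs_neg, abs_one, one_pow]
  norm_num

def T (s : ℝ) : ℝ := 1 + ∑' n : ℕ, eps n * exp (-π * s * q n^2)

def T1 (s : ℝ) : ℝ := ∑' n : ℕ, (eps n * -(π * q n^2)) * exp (-π * s * q n^2)

def T2 (s : ℝ) : ℝ := ∑' n : ℕ, (eps n * (π * q n^2)^2) * exp (-π * s * q n^2)

lemma summable_qw (m : ℕ) {t : ℝ} (ht : 0 < t) :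
    Summable (fun n : ℕ => 2*(π * q n^2)^m * exp (-π * t * q n^2)) := by
  have h := (HurwitzKernelBounds.summable_f_nat (2*m) 1 ht).mul_left (2 * π ^ m)
  refine h.congr (fun n => ?_)
  unfold HurwitzKernelBounds.f_nat
  have h1 : ((n:ℝ) + 1) ^ (2*m) = (q n^2)^m := by
    rw [pow_mul]; rfl
  have h2 : -π * ((n:ℝ)+1)^2 * t = -π * t * q n^2 := by unfold q; ring
  rw [h1, h2, mul_pow]
  ring

lemma summable_qA (A : ℕ → ℝ) (m : ℕ) (hA : ∀ n, |A n| ≤ 2 * (π * q n^2)^m)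
    {t : ℝ} (ht : 0 < t) : Summable (fun n : ℕ => A n * exp (-π * t * q n^2)) := by
  apply Summable.of_norm_bounded (summable_qw m ht)
  intro n
  rw [norm_eq_abs, abs_mul, abs_of_nonneg (exp_pos _).le]
  exact mul_le_mul_of_nonneg_right (hA n) (exp_pos _).le

lemma hasDerivAt_auxN (A : ℕ → ℝ) (m : ℕ) (hA : ∀ n, |A n| ≤ 2 * (π * q n^2)^m)
    {s : ℝ} (hs : 0 < s) :
    HasDerivAt (fun y => ∑' n : ℕ, A n * exp (-π * y * q n^2))
      (∑' n : ℕ, (A n * -(π * q n^2)) * exp (-π * s * q n^2)) s := by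
  have hopen : IsOpen (Ioi (s/2)) := isOpen_Ioi
  have hconn : IsPreconnected (Ioi (s/2)) := (convex_Ioi _).isPreconnected
  have hmem : s ∈ Ioi (s/2) := by simp only [Set.mem_Ioi]; linarith
  have hu : Summable (fun n : ℕ => 2*(π * q n^2)^(m+1) * exp (-π * (s/2) * q n^2)) :=
    summable_qw (m+1) (by linarith)
  have key := hasDerivAt_tsum_of_isPreconnected hu hopen hconn
    (g := fun (n : ℕ) y => A n * exp (-π * y * q n^2))
    (g' := fun (n : ℕ) y => A n * (exp (-π * y * q n^2) * (-π * q n^2)))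
    (fun n y _ => ((hasDerivAt_linear (q n^2) y).exp).const_mul (A n))
    (fun n y hy => by
      have hq := q_pos n
      have hyx : s/2 ≤ y := le_of_lt hy
      have h1 : exp (-π * y * q n^2) ≤ exp (-π * (s/2) * q n^2) := by
        apply exp_le_exp.mpr
        nlinarith [mul_nonneg (mul_nonneg (sub_nonneg.mpr hyx) pi_pos.le) (sq_nonneg (q n))]
      show ‖A n * (exp (-π * y * q n^2) * (-π * q n^2))‖ ≤ _
      have habs : |(-π * q n^2)| = π * q n^2 := by
        rw [abs_of_nonpos (by nlinarith [pi_pos, sq_nonneg (q n)] : -π * q n^2 ≤ 0)]; ring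
      rw [norm_eq_abs, abs_mul, abs_mul, habs, abs_of_nonneg (exp_pos _).le]
      calc |A n| * (exp (-π * y * q n^2) * (π * q n^2))
          ≤ (2*(π * q n^2)^m) * (exp (-π * (s/2) * q n^2) * (π * q n^2)) := by
            apply mul_le_mul (hA n) _ (by positivity) (by positivity)
            exact mul_le_mul_of_nonneg_right h1 (by positivity)
        _ = 2*(π * q n^2)^(m+1) * exp (-π * (s/2) * q n^2) := by ring)
    hmem (summable_qA A m hA hs) hmem
  refine key.congr_deriv ?_
  congr 1
  funext n
  ring

lemma eps_bound0 : ∀ n, |eps n| ≤ 2 * (π * q n^2)^0 := by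
  intro n; rw [abs_eps]; norm_num

lemma eps_bound1 : ∀ n, |eps n * -(π * q n^2)| ≤ 2 * (π * q n^2)^1 := by
  intro n
  have hq := q_pos n
  rw [abs_mul, abs_eps, abs_neg, abs_of_nonneg (by positivity : (0:ℝ) ≤ π * q n^2), pow_one]

lemma hasDerivAt_T {s : ℝ} (hs : 0 < s) : HasDerivAt T (T1 s) s := by
  exact (hasDerivAt_auxN eps 0 eps_bound0 hs).const_add 1

lemma hasDerivAt_T1 {s : ℝ} (hs : 0 < s) : HasDerivAt T1 (T2 s) s := by
  have h := hasDerivAt_auxN (fun n => eps n * -(π * q n^2)) 1 eps_bound1 hs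
  have heq : (fun y => ∑' n : ℕ, (eps n * -(π * q n^2)) * exp (-π * y * q n^2)) = T1 := rfl
  rw [heq] at h
  have : (∑' n : ℕ, ((eps n * -(π * q n^2)) * -(π * q n^2)) * exp (-π * s * q n^2)) = T2 s := by
    unfold T2
    congr 1
    funext n
    ring
  rw [this] at h
  exact h

lemma exp_neg_two_le : exp (-2:ℝ) ≤ 1/7 := by
  have he : (2.7:ℝ) < exp 1 := by have := exp_one_gt_d9; linarith
  have h2 : exp (2:ℝ) = exp 1 * exp 1 := by rw [← exp_add]; norm_num
  have hinv : exp (-2:ℝ) * exp (2:ℝ) = 1 := by rw [← exp_add]; norm_num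
  nlinarith [exp_pos (-2:ℝ), exp_pos (2:ℝ)]

lemma tail_geo_bound {s : ℝ} (hv : 2 ≤ π * s) (f : ℕ → ℝ)
    (hf : ∀ n, |f n| ≤ 2 * exp (-π * s * q n^2)) :
    ∑' n : ℕ, |f n| ≤ 2 * exp (-2:ℝ) * (1 - exp (-2:ℝ))⁻¹ := by
  have hs : 0 < s := by nlinarith [pi_pos]
  have hE : exp (-2:ℝ) < 1 := by rw [exp_lt_one_iff]; norm_num
  have hterm : ∀ n : ℕ, |f n| ≤ 2 * exp (-2:ℝ) * exp (-2:ℝ)^n := by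
    intro n
    refine (hf n).trans ?_
    have hq1 := q_ge_one n
    have h1 : exp (-π * s * q n^2) ≤ exp (-2 * q n) := by
      apply exp_le_exp.mpr
      nlinarith [sq_nonneg (q n - 1), mul_nonneg (sub_nonneg.mpr hv) (sub_nonneg.mpr hq1),
        mul_nonneg (by linarith : (0:ℝ) ≤ π * s) (sq_nonneg (q n - 1))]
    have h2 : exp (-2 * q n) = exp (-2:ℝ) * exp (-2:ℝ)^n := by
      rw [← exp_nat_mul, ← exp_add]
      congr 1
      unfold q
      ring
    calc 2 * exp (-π * s * q n^2) ≤ 2 * exp (-2 * q n) := by linarith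
      _ = 2 * exp (-2:ℝ) * exp (-2:ℝ)^n := by rw [h2]; ring
  have hgs : Summable (fun n : ℕ => 2 * exp (-2:ℝ) * exp (-2:ℝ)^n) :=
    (summable_geometric_of_lt_one (exp_pos _).le hE).mul_left _
  have habs : Summable (fun n : ℕ => |f n|) := by
    apply Summable.of_nonneg_of_le (fun n => abs_nonneg _) hterm hgs
  calc ∑' n : ℕ, |f n| ≤ ∑' n : ℕ, 2 * exp (-2:ℝ) * exp (-2:ℝ)^n :=
        Summable.tsum_le_tsum hterm habs hgs
    _ = 2 * exp (-2:ℝ) * (1 - exp (-2:ℝ))⁻¹ := by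
        rw [tsum_mul_left, tsum_geometric_of_lt_one (exp_pos _).le hE]

lemma T_lower {s : ℝ} (hv : 2 ≤ π * s) : 2/3 ≤ T s := by
  have hs : 0 < s := by nlinarith [pi_pos]
  have hsum : Summable (fun n : ℕ => eps n * exp (-π * s * q n^2)) :=
    summable_qA eps 0 eps_bound0 hs
  have habs : |∑' n : ℕ, eps n * exp (-π * s * q n^2)| ≤
      ∑' n : ℕ, |eps n * exp (-π * s * q n^2)| := by
    have h := norm_tsum_le_tsum_norm (f := fun n : ℕ => eps n * exp (-π * s * q n^2))
      (hsum.abs.congr (fun n => by rw [norm_eq_abs]))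
    exact h
  have htail := tail_geo_bound hv (fun n => eps n * exp (-π * s * q n^2)) (fun n => by
    rw [abs_mul, abs_eps, abs_of_nonneg (exp_pos _).le])
  have hE2 := exp_neg_two_le
  have hE2pos := exp_pos (-2:ℝ)
  have hbound : 2 * exp (-2:ℝ) * (1 - exp (-2:ℝ))⁻¹ ≤ 1/3 := by
    have h7 : (0:ℝ) < 1 - exp (-2:ℝ) := by nlinarith
    rw [mul_inv_le_iff₀ h7]
    nlinarith
  have : |∑' n : ℕ, eps n * exp (-π * s * q n^2)| ≤ 1/3 := le_trans habs (le_trans htail hbound)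
  have habs2 := abs_le.mp this
  unfold T
  linarith [habs2.1]

lemma T_pos {s : ℝ} (hv : 2 ≤ π * s) : 0 < T s := lt_of_lt_of_le (by norm_num) (T_lower hv)

set_option maxHeartbeats 1000000 in
/-- Key estimate for theta-4 side : `T' + s T'' < 0` for `π s ≥ 2`. -/
lemma key4 {s : ℝ} (hv : 2 ≤ π * s) : T1 s + s * T2 s < 0 := by
  have hs : 0 < s := by nlinarith [pi_pos]
  have hsum1 : Summable (fun n : ℕ => (eps n * -(π * q n^2)) * exp (-π * s * q n^2)) :=
    summable_qA _ 1 eps_bound1 hs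
  have hsum2 : Summable (fun n : ℕ => (eps n * (π * q n^2)^2) * exp (-π * s * q n^2)) := by
    apply summable_qA _ 2 (fun n => ?_) hs
    rw [abs_mul, abs_eps, abs_of_nonneg (by positivity : (0:ℝ) ≤ (π * q n^2)^2)]
  -- combine into a single sum
  have hcomb : T1 s + s * T2 s = ∑' n : ℕ,
      ((-1:ℝ)^(n+1) * (2 * (π * q n^2) * (s * (π * q n^2) - 1))) * exp (-π * s * q n^2) := by
    unfold T1 T2
    rw [← tsum_mul_left, ← Summable.tsum_add hsum1 (hsum2.mul_left s)]
    apply tsum_congr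
    intro n
    unfold eps
    ring
  set d : ℕ → ℝ := fun n => (2 * (π * q n^2) * (s * (π * q n^2) - 1)) * exp (-π * s * q n^2)
    with hd
  have hdpos : ∀ n, 0 ≤ d n := by
    intro n
    have hq1 := q_ge_one n
    have h1 : 1 ≤ s * (π * q n^2) := by nlinarith [sq_nonneg (q n - 1)]
    have : (0:ℝ) ≤ 2 * (π * q n^2) := by positivity
    apply mul_nonneg (by nlinarith) (exp_pos _).le
  have hsumd : Summable (fun n : ℕ => ((-1:ℝ)^(n+1) * (2 * (π * q n^2) * (s * (π * q n^2) - 1))) * exp (-π * s * q n^2)) := by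
    refine (hsum1.add (hsum2.mul_left s)).congr (fun n => ?_)
    unfold eps
    ring
  -- split off the first term
  rw [hcomb, Summable.tsum_eq_zero_add hsumd]
  have hfirst : ((-1:ℝ)^(0+1) * (2 * (π * q 0^2) * (s * (π * q 0^2) - 1))) * exp (-π * s * q 0^2)
      = -d 0 := by rw [hd]; ring
  rw [hfirst]
  -- bound the tail
  have htailsum : Summable (fun n : ℕ => ((-1:ℝ)^(n+1+1) * (2 * (π * q (n+1)^2) * (s * (π * q (n+1)^2) - 1))) * exp (-π * s * q (n+1)^2)) := by
    exact ((summable_nat_add_iff 1).mpr hsumd)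
  have habs : |∑' n : ℕ, ((-1:ℝ)^(n+1+1) * (2 * (π * q (n+1)^2) * (s * (π * q (n+1)^2) - 1))) * exp (-π * s * q (n+1)^2)|
      ≤ ∑' n : ℕ, d (n+1) := by
    have h1 : ∀ n : ℕ, |((-1:ℝ)^(n+1+1) * (2 * (π * q (n+1)^2) * (s * (π * q (n+1)^2) - 1))) * exp (-π * s * q (n+1)^2)| = d (n+1) := by
      intro n
      rw [abs_mul, abs_mul, abs_pow, abs_neg, abs_one, one_pow, one_mul,
        abs_of_nonneg (exp_pos _).le, hd]
      have hq1 := q_ge_one (n+1)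
      have h2 : 1 ≤ s * (π * q (n+1)^2) := by nlinarith [sq_nonneg (q (n+1) - 1)]
      rw [abs_of_nonneg (by nlinarith : (0:ℝ) ≤ 2 * (π * q (n+1)^2) * (s * (π * q (n+1)^2) - 1))]
    have h2 := norm_tsum_le_tsum_norm (f := fun n : ℕ => ((-1:ℝ)^(n+1+1) * (2 * (π * q (n+1)^2) * (s * (π * q (n+1)^2) - 1))) * exp (-π * s * q (n+1)^2)) ?_
    · rw [norm_eq_abs] at h2
      refine h2.trans (le_of_eq (tsum_congr (fun n => ?_)))
      rw [norm_eq_abs, h1 n]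
    · refine (htailsum.abs.congr (fun n => ?_))
      rw [norm_eq_abs]
  -- quantitative tail bound : d (n+1) ≤ 2π * (πs) * e^{-2(πs)} * (e^{-πs})^n
  have hv0 : (0:ℝ) < π * s := by linarith
  have hEv : exp (-(π*s)) < 1 := by rw [exp_lt_one_iff]; linarith
  have hEvpos := exp_pos (-(π*s))
  have hterm : ∀ n : ℕ, d (n+1) ≤ (2*π*(π*s)*exp (-(2:ℝ)*(π*s))) * exp (-(π*s))^n := by
    intro n
    have hQ2 : (2:ℝ) ≤ q (n+1) := by
      unfold q; push_cast
      have : (0:ℝ) ≤ (n:ℝ) := Nat.cast_nonneg n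
      linarith
    have hQ0 : (0:ℝ) < q (n+1) := by linarith
    have hA : 2 * (π * q (n+1)^2) * (s * (π * q (n+1)^2) - 1) ≤ 2*π*(π*s) * q (n+1)^4 := by
      nlinarith [sq_nonneg (q (n+1)), pi_pos]
    have hB1 : q (n+1)^4 ≤ exp ((π*s) * q (n+1)) := by
      have h1 : q (n+1)^2 ≤ exp (q (n+1)) := sq_le_exp hQ0.le
      have h3 : (q (n+1)^2)^2 ≤ (exp (q (n+1)))^2 := pow_le_pow_left₀ (sq_nonneg _) h1 2
      have h4 : (exp (q (n+1)))^2 = exp (2 * q (n+1)) := by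
        rw [← exp_nat_mul]; ring_nf
      have h5 : exp (2 * q (n+1)) ≤ exp ((π*s) * q (n+1)) :=
        exp_le_exp.mpr (by nlinarith)
      calc q (n+1)^4 = (q (n+1)^2)^2 := by ring
        _ ≤ (exp (q (n+1)))^2 := h3
        _ = exp (2 * q (n+1)) := h4
        _ ≤ exp ((π*s) * q (n+1)) := h5
    have hB2 : exp (-π * s * q (n+1)^2) ≤ exp (-(π*s) * (2 * q (n+1))) := by
      apply exp_le_exp.mpr
      nlinarith [mul_nonneg (mul_nonneg hv0.le hQ0.le) (by linarith : (0:ℝ) ≤ q (n+1) - 2)]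
    have hB : q (n+1)^4 * exp (-π * s * q (n+1)^2) ≤ exp (-(π*s) * q (n+1)) := by
      calc q (n+1)^4 * exp (-π * s * q (n+1)^2)
          ≤ exp ((π*s) * q (n+1)) * exp (-(π*s) * (2 * q (n+1))) :=
            mul_le_mul hB1 hB2 (exp_pos _).le (exp_pos _).le
        _ = exp ((π*s) * q (n+1) + -(π*s) * (2 * q (n+1))) := by rw [← exp_add]
        _ = exp (-(π*s) * q (n+1)) := by congr 1; ring
    have hC : exp (-(π*s) * q (n+1)) = exp (-(2:ℝ)*(π*s)) * exp (-(π*s))^n := by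
      rw [← exp_nat_mul, ← exp_add]
      congr 1
      unfold q
      push_cast
      ring
    calc d (n+1) = (2 * (π * q (n+1)^2) * (s * (π * q (n+1)^2) - 1)) * exp (-π * s * q (n+1)^2) := rfl
      _ ≤ (2*π*(π*s) * q (n+1)^4) * exp (-π * s * q (n+1)^2) :=
          mul_le_mul_of_nonneg_right hA (exp_pos _).le
      _ = (2*π*(π*s)) * (q (n+1)^4 * exp (-π * s * q (n+1)^2)) := by ring
      _ ≤ (2*π*(π*s)) * exp (-(π*s) * q (n+1)) := by
          apply mul_le_mul_of_nonneg_left hB (by positivity)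
      _ = (2*π*(π*s)*exp (-(2:ℝ)*(π*s))) * exp (-(π*s))^n := by rw [hC]; ring
  have hgeo : Summable (fun n : ℕ => (2*π*(π*s)*exp (-(2:ℝ)*(π*s))) * exp (-(π*s))^n) :=
    (summable_geometric_of_lt_one hEvpos.le hEv).mul_left _
  have hsumdtail : Summable (fun n : ℕ => d (n+1)) :=
    Summable.of_nonneg_of_le (fun n => hdpos _) hterm hgeo
  have htail2 := Summable.tsum_le_tsum hterm hsumdtail hgeo
  rw [tsum_mul_left, tsum_geometric_of_lt_one hEvpos.le hEv] at htail2
  -- numeric comparison with d 0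
  have hq0 : q 0 = 1 := by unfold q; norm_num
  have hd0 : d 0 = 2*π*((π*s) - 1) * exp (-(π*s)) := by
    simp only [hd, hq0]
    rw [show -π * s * (1:ℝ)^2 = -(π*s) by ring]
    ring
  have hE7 : exp (-(π*s)) ≤ 1/7 := by
    have h1 : exp (-(π*s)) ≤ exp (-2:ℝ) := exp_le_exp.mpr (by linarith)
    linarith [exp_neg_two_le]
  have h1mE : (0:ℝ) < 1 - exp (-(π*s)) := by linarith
  have hkey : (π*s) * exp (-(π*s)) < ((π*s) - 1) * (1 - exp (-(π*s))) := by
    have h1 : (2*(π*s)-1) * exp (-(π*s)) ≤ (2*(π*s)-1) * (1/7) :=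
      mul_le_mul_of_nonneg_left hE7 (by linarith)
    nlinarith
  have hnum : 2*π*(π*s)*exp (-(2:ℝ)*(π*s)) * (1 - exp (-(π*s)))⁻¹ < d 0 := by
    have hstep : 2*π*((π*s) * exp (-(π*s)) * exp (-(π*s)))
        < 2*π*(((π*s)-1) * (1 - exp (-(π*s))) * exp (-(π*s))) := by
      nlinarith [mul_lt_mul_of_pos_right hkey hEvpos, pi_pos]
    have hstep2 := mul_lt_mul_of_pos_right hstep (inv_pos.mpr h1mE)
    have hsplit : exp (-(2:ℝ)*(π*s)) = exp (-(π*s)) * exp (-(π*s)) := by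
      rw [← exp_add]; congr 1; ring
    calc 2*π*(π*s)*exp (-(2:ℝ)*(π*s)) * (1 - exp (-(π*s)))⁻¹
        = 2*π*((π*s) * exp (-(π*s)) * exp (-(π*s))) * (1 - exp (-(π*s)))⁻¹ := by
          rw [hsplit]; ring
      _ < 2*π*(((π*s)-1) * (1 - exp (-(π*s))) * exp (-(π*s))) * (1 - exp (-(π*s)))⁻¹ := hstep2
      _ = 2*π*(((π*s)-1) * exp (-(π*s))) * ((1 - exp (-(π*s))) * (1 - exp (-(π*s)))⁻¹) := by ring
      _ = 2*π*(((π*s)-1) * exp (-(π*s))) := by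
          rw [mul_inv_cancel₀ (ne_of_gt h1mE), mul_one]
      _ = d 0 := by rw [hd0]; ring
  have hfin : ∑' n : ℕ, d (n+1) < d 0 := lt_of_le_of_lt htail2 hnum
  have htle := le_abs_self (∑' n : ℕ, ((-1:ℝ)^(n+1+1) * (2 * (π * q (n+1)^2) * (s * (π * q (n+1)^2) - 1))) * exp (-π * s * q (n+1)^2))
  linarith

lemma strictAntiOn_L4 : StrictAntiOn (fun s => s * T1 s / T s) (Ici (2/π)) := by
  have hpi := pi_pos
  apply strictAntiOn_of_deriv_neg (convex_Ici _)
  · intro s hs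
    rw [mem_Ici] at hs
    have hv : 2 ≤ π * s := by
      rw [div_le_iff₀ hpi] at hs; linarith [hs]
    have hs0 : 0 < s := by nlinarith
    exact (((hasDerivAt_id' s).mul (hasDerivAt_T1 hs0)).div (hasDerivAt_T hs0)
      (ne_of_gt (T_pos hv))).continuousAt.continuousWithinAt
  · intro s hs
    rw [interior_Ici, mem_Ioi] at hs
    have hv : 2 ≤ π * s := by
      rw [div_lt_iff₀ hpi] at hs; linarith [hs]
    have hs0 : 0 < s := by nlinarith
    have hder := ((hasDerivAt_id' s).mul (hasDerivAt_T1 hs0)).div (hasDerivAt_T hs0)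
      (ne_of_gt (T_pos hv))
    rw [show deriv (fun s => s * T1 s / T s) s = ((1 * T1 s + s * T2 s) * T s - s * T1 s * T1 s) / T s ^ 2 from hder.deriv]
    apply div_neg_of_neg_of_pos
    · have hk := key4 hv
      have hT := T_pos hv
      nlinarith [mul_neg_of_neg_of_pos hk hT, mul_nonneg hs0.le (sq_nonneg (T1 s))]
    · exact pow_pos (T_pos hv) 2

lemma Th_eq_evenKernel {x : ℝ} (hx : 0 < x) :
    Th x = HurwitzZeta.evenKernel ((1:ℝ)/2 : ℝ) x := by
  have h := HurwitzZeta.hasSum_int_evenKernel (1/2 : ℝ) hx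
  rw [Th, ← h.tsum_eq]
  apply tsum_congr
  intro k
  congr 1
  ring

lemma T_eq_cosKernel {s : ℝ} (hs : 0 < s) :
    T s = HurwitzZeta.cosKernel ((1:ℝ)/2 : ℝ) s := by
  have h := HurwitzZeta.hasSum_nat_cosKernel₀ (1/2 : ℝ) hs
  have hterm : (fun n : ℕ => 2 * Real.cos (2*π*(1/2:ℝ)*((n:ℝ)+1)) * exp (-π*((n:ℝ)+1)^2*s))
      = fun n : ℕ => eps n * exp (-π*s*q n^2) := by
    funext n
    have hc : Real.cos (2*π*(1/2:ℝ)*((n:ℝ)+1)) = (-1:ℝ)^(n+1) := by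
      rw [show 2*π*(1/2:ℝ)*((n:ℝ)+1) = (((n+1:ℕ)):ℝ)*π - 0 by push_cast; ring]
      rw [Real.cos_nat_mul_pi_sub]
      simp
    rw [hc, show -π*((n:ℝ)+1)^2*s = -π*s*q n^2 by unfold q; ring]
    unfold eps
    ring
  rw [hterm] at h
  rw [T, h.tsum_eq]
  ring

lemma jacobi_Th {x : ℝ} (hx : 0 < x) :
    Th x = x ^ (-(1:ℝ)/2) * T x⁻¹ := by
  rw [Th_eq_evenKernel hx, HurwitzZeta.evenKernel_functional_equation,
    ← T_eq_cosKernel (by positivity : (0:ℝ) < 1/x)]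
  rw [show (-(1:ℝ)/2) = -(1/2:ℝ) by ring, rpow_neg hx.le]
  rw [one_div, one_div]
  congr 1
  exact congrArg T (one_div x)

set_option maxHeartbeats 1000000 in
lemma L2_transfer {x : ℝ} (hx : 0 < x) (hx2 : x ≤ π/2) :
    x * -(P1 x) / Th x = -(1/2) - x⁻¹ * T1 x⁻¹ / T x⁻¹ := by
  have hpi := pi_pos
  have hs0 : (0:ℝ) < x⁻¹ := by positivity
  have hv : 2 ≤ π * x⁻¹ := by
    rw [mul_comm, inv_mul_eq_div, le_div_iff₀ hx]
    linarith
  have hT := T_pos hv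
  have h1 : HasDerivAt (fun y : ℝ => y ^ (-(1:ℝ)/2)) ((-(1:ℝ)/2) * x ^ (-(1:ℝ)/2 - 1)) x :=
    Real.hasDerivAt_rpow_const (Or.inl (ne_of_gt hx))
  have h2 : HasDerivAt (fun y : ℝ => T y⁻¹) (T1 x⁻¹ * -(x^2)⁻¹) x :=
    (hasDerivAt_T hs0).comp x (hasDerivAt_inv (ne_of_gt hx))
  have hprod := h1.mul h2
  have heq : Th =ᶠ[nhds x] (fun y : ℝ => y ^ (-(1:ℝ)/2) * T y⁻¹) := by
    filter_upwards [IsOpen.mem_nhds isOpen_Ioi (mem_Ioi.mpr hx)] with y hy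
    exact jacobi_Th hy
  have hThd2 : HasDerivAt Th
      ((-(1:ℝ)/2) * x ^ (-(1:ℝ)/2 - 1) * T x⁻¹ + x ^ (-(1:ℝ)/2) * (T1 x⁻¹ * -(x^2)⁻¹)) x :=
    hprod.congr_of_eventuallyEq heq
  have hD := (hasDerivAt_Th hx).unique hThd2
  have hThx : Th x = x ^ (-(1:ℝ)/2) * T x⁻¹ := jacobi_Th hx
  have hsplit : x ^ (-(1:ℝ)/2 - 1) = x ^ (-(1:ℝ)/2) * x⁻¹ := by
    rw [show (-(1:ℝ)/2 - 1) = (-(1:ℝ)/2) + (-1:ℝ) by ring, rpow_add hx, rpow_neg_one]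
  have hr : (0:ℝ) < x ^ (-(1:ℝ)/2) := rpow_pos_of_pos hx _
  rw [hD, hThx, hsplit]
  have hTne := ne_of_gt hT
  have hxne := ne_of_gt hx
  have hrne := ne_of_gt hr
  rw [div_eq_iff (by positivity : x ^ (-(1:ℝ)/2) * T x⁻¹ ≠ 0)]
  have hc1 : x * x⁻¹ = 1 := mul_inv_cancel₀ hxne
  have hc2 : T x⁻¹ * (T x⁻¹)⁻¹ = 1 := mul_inv_cancel₀ hTne
  field_simp [hxne, hTne, hrne]
  simp only [one_div]
  ring

lemma strictAntiOn_L2_right : StrictAntiOn (fun x => x * -(P1 x) / Th x) (Ici (π/2)) := by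
  have hpi := pi_pos
  apply strictAntiOn_of_deriv_neg (convex_Ici _)
  · intro x hxm
    rw [mem_Ici] at hxm
    have hx : 0 < x := by linarith
    exact (((hasDerivAt_id' x).mul ((hasDerivAt_P1 hx).neg)).div (hasDerivAt_Th hx)
      (ne_of_gt (Th_pos hx))).continuousAt.continuousWithinAt
  · intro x hxm
    rw [interior_Ici, mem_Ioi] at hxm
    have hx : 0 < x := by linarith
    have hder := ((hasDerivAt_id' x).mul ((hasDerivAt_P1 hx).neg)).div (hasDerivAt_Th hx)
      (ne_of_gt (Th_pos hx))
    rw [show deriv (fun x => x * -(P1 x) / Th x) x = ((1 * -(P1 x) + x * -(-(P2 x))) * Th x - x * -(P1 x) * -(P1 x)) / Th x ^ 2 from hder.deriv]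
    apply div_neg_of_neg_of_pos
    · have hk := key2 (le_of_lt hxm)
      nlinarith [hk]
    · exact pow_pos (Th_pos hx) 2

lemma strictAntiOn_L2 : StrictAntiOn (fun x => x * -(P1 x) / Th x) (Ioi 0) := by
  have hpi := pi_pos
  have hleft : ∀ x₁ x₂ : ℝ, 0 < x₁ → x₁ < x₂ → x₂ ≤ π/2 →
      (fun x => x * -(P1 x) / Th x) x₂ < (fun x => x * -(P1 x) / Th x) x₁ := by
    intro x₁ x₂ h1 h12 h2
    have h1' : 0 < x₂ := by linarith
    show x₂ * -P1 x₂ / Th x₂ < x₁ * -P1 x₁ / Th x₁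
    rw [L2_transfer h1 (by linarith), L2_transfer h1' h2]
    have hm1 : x₁⁻¹ ∈ Ici (2/π) := by
      rw [mem_Ici, div_le_iff₀ hpi, inv_mul_eq_div, le_div_iff₀ h1]
      linarith
    have hm2 : x₂⁻¹ ∈ Ici (2/π) := by
      rw [mem_Ici, div_le_iff₀ hpi, inv_mul_eq_div, le_div_iff₀ h1']
      linarith
    have hlt : x₂⁻¹ < x₁⁻¹ := by
      apply inv_strictAnti₀ h1 h12
    have hmono := strictAntiOn_L4 hm2 hm1 hlt
    dsimp only at hmono
    linarith [hmono]
  intro x₁ hx₁ x₂ hx₂ h12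
  rw [mem_Ioi] at hx₁ hx₂
  rcases le_or_gt x₂ (π/2) with hc | hc
  · exact hleft x₁ x₂ hx₁ h12 hc
  · rcases le_or_gt (π/2) x₁ with hd | hd
    · exact strictAntiOn_L2_right (mem_Ici.mpr hd) (mem_Ici.mpr (by linarith)) h12
    · calc (fun x => x * -(P1 x) / Th x) x₂
          < (fun x => x * -(P1 x) / Th x) (π/2) :=
            strictAntiOn_L2_right (mem_Ici.mpr (le_refl _)) (mem_Ici.mpr (by linarith)) hc
        _ < (fun x => x * -(P1 x) / Th x) x₁ :=
            hleft x₁ (π/2) hx₁ hd (le_refl _)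

lemma hasDerivAt_F (s : ℝ) : HasDerivAt (fun u => Real.log (Th (Real.exp u)))
    ((fun x => x * -(P1 x) / Th x) (Real.exp s)) s := by
  have h := ((hasDerivAt_Th (exp_pos s)).comp s (Real.hasDerivAt_exp s)).log
    (ne_of_gt (Th_pos (exp_pos s)))
  convert h using 1
  · rfl
  show exp s * -P1 (exp s) / Th (exp s) = -P1 (exp s) * exp s / Th (exp s)
  ring

lemma concaveF : StrictConcaveOn ℝ univ (fun u => Real.log (Th (Real.exp u))) := by
  apply StrictAnti.strictConcaveOn_univ_of_deriv
  · exact continuous_iff_continuousAt.mpr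
      (fun s => (hasDerivAt_F s).differentiableAt.continuousAt)
  · have hd : deriv (fun u => Real.log (Th (Real.exp u)))
        = fun s => (fun x => x * -(P1 x) / Th x) (Real.exp s) :=
      funext (fun s => (hasDerivAt_F s).deriv)
    rw [hd]
    intro s₁ s₂ h12
    exact strictAntiOn_L2 (mem_Ioi.mpr (exp_pos s₁)) (mem_Ioi.mpr (exp_pos s₂))
      (exp_lt_exp.mpr h12)

lemma main_strict {t y : ℝ} (ht : 0 < t) (hy : 0 < y) (hy1 : y ≠ 1) :
    Th (t*y) * Th (t/y) < Th t ^ 2 := by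
  have hty : 0 < t*y := by positivity
  have htdy : 0 < t/y := by positivity
  have hne : Real.log (t*y) ≠ Real.log (t/y) := by
    intro h
    have h3 : t*y = t/y := by
      rw [← Real.exp_log hty, ← Real.exp_log htdy, h]
    rw [eq_div_iff (ne_of_gt hy)] at h3
    exact hy1 (by nlinarith)
  have hcon := concaveF.2 (mem_univ (Real.log (t*y))) (mem_univ (Real.log (t/y))) hne
      (by norm_num : (0:ℝ) < 1/2) (by norm_num : (0:ℝ) < 1/2) (by norm_num : (1:ℝ)/2 + 1/2 = 1)
  simp only [smul_eq_mul] at hcon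
  have hmid : (1/2) * Real.log (t*y) + (1/2) * Real.log (t/y) = Real.log t := by
    rw [Real.log_mul (ne_of_gt ht) (ne_of_gt hy), Real.log_div (ne_of_gt ht) (ne_of_gt hy)]
    ring
  rw [hmid, Real.exp_log hty, Real.exp_log htdy, Real.exp_log ht] at hcon
  have h2 : Real.log (Th (t*y) * Th (t/y)) < Real.log (Th t ^ 2) := by
    rw [Real.log_mul (ne_of_gt (Th_pos hty)) (ne_of_gt (Th_pos htdy)), Real.log_pow]
    push_cast
    linarith
  have h4 := Real.exp_lt_exp.mpr h2
  rwa [Real.exp_log (mul_pos (Th_pos hty) (Th_pos htdy)),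
    Real.exp_log (pow_pos (Th_pos ht) 2)] at h4

end FS2

open FS2 in
theorem faulhuber_steinerberger_theta2 (t : ℝ) (ht : 0 < t) :
    ∀ y : ℝ, 0 < y →
      ((∑' k : ℤ, Real.exp (-π * (t * y) * ((k : ℝ) + 1 / 2) ^ 2)) *
          (∑' k : ℤ, Real.exp (-π * (t / y) * ((k : ℝ) + 1 / 2) ^ 2)) ≤
        (∑' k : ℤ, Real.exp (-π * t * ((k : ℝ) + 1 / 2) ^ 2)) ^ 2) ∧
      (((∑' k : ℤ, Real.exp (-π * (t * y) * ((k : ℝ) + 1 / 2) ^ 2)) *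
          (∑' k : ℤ, Real.exp (-π * (t / y) * ((k : ℝ) + 1 / 2) ^ 2)) =
        (∑' k : ℤ, Real.exp (-π * t * ((k : ℝ) + 1 / 2) ^ 2)) ^ 2) ↔ y = 1) := by
  intro y hy
  by_cases hy1 : y = 1
  · subst hy1
    simp only [mul_one, div_one]
    exact ⟨le_of_eq (pow_two _).symm, ⟨fun _ => by trivial, fun _ => (pow_two _).symm⟩⟩
  · have hs : Th (t*y) * Th (t/y) < Th t ^ 2 := main_strict ht hy hy1
    exact ⟨le_of_lt hs, ⟨fun h => absurd h (ne_of_lt hs), fun h => absurd h hy1⟩⟩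
end FS2
end
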